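/- arXiv:1105.0474 — 2 statements merged into one kernel-verified Lean document; each statement's English description precedes it below -/
import Mathlib

section
/- Let d ≥ 2, let k ≥ 3 be an integer, and let H be chosen according to Σ(K_{n_1,…,n_d},k). Let E = E(H), let E' be the set of edges of H that share no vertex with any other edge of H, and let N = (∏_{j=1}^d n_j)^{1/d} and S = ∑_{j=1}^d n_j. Then: (1) E[|E|] = N^d / k^{d−1}; (2) E[|E'|] = (N^d / k^{d−1}) ((k−1)/k)^{S−d} ≥ (N^d / k^{d−1})(1 − S/k); (3) E[|E∖E'|] ≤ N^d S / k^d; and (4) for all η > 0, P(|E'| − E[|E'|] ≥ η E[|E'|]) ≤ 1/(η² E[|E'|]) + (1/η²)(((k−1)/(k−2))^{2d−1} − 1). -/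
open Finset MeasureTheory
open scoped Classical BigOperators

/-- An edge of the complete `d`-partite hyper-graph with color classes `[n 0], …, [n (d-1)]`. -/
abbrev Edge {d : ℕ} (n : Fin d → ℕ) := ∀ i : Fin d, Fin (n i)

/-- A `d`-partite hyper-graph, identified with its edge set. -/
abbrev HG {d : ℕ} (n : Fin d → ℕ) := Finset (Edge n)

/-- A finite set of edges is a non-crossing hyper-matching iff any two distinct edges of it
are strictly comparable in every coordinate (equivalently: pairwise node-disjoint and
totally ordered by the componentwise partial order). -/
def NonCrossing {d : ℕ} {n : Fin d → ℕ} (M : Finset (Edge n)) : Prop :=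
  ∀ e ∈ M, ∀ f ∈ M, e ≠ f → (∀ i, e i < f i) ∨ (∀ i, f i < e i)

/-- `L G` is the maximum size of a non-crossing hyper-matching contained in `G`. -/
noncomputable def L {d : ℕ} {n : Fin d → ℕ} (G : HG n) : ℕ :=
  (G.powerset.filter NonCrossing).sup Finset.card

/-- Expectation of `f` under the weight function `w` on a finite outcome type. -/
noncomputable def wExp {α : Type*} [Fintype α] (w : α → ℝ) (f : α → ℝ) : ℝ :=
  ∑ a, w a * f a

/-- Probability of the event `A` under the weight function `w`. -/
noncomputable def wProb {α : Type*} [Fintype α] (w : α → ℝ) (A : Set α) : ℝ :=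
  ∑ a ∈ Finset.univ.filter (· ∈ A), w a

/-- `m` is a median of the random variable `X` under the weights `w`. -/
def IsMedianW {α : Type*} [Fintype α] (w : α → ℝ) (X : α → ℝ) (m : ℝ) : Prop :=
  1 / 2 ≤ wProb w {a | X a ≤ m} ∧ 1 / 2 ≤ wProb w {a | m ≤ X a}

/-- The probability of the outcome `H` in the binomial model in which every element of `α`
is present independently with probability `p`. -/
noncomputable def binomW {α : Type*} [Fintype α] (p : ℝ) (H : Finset α) : ℝ :=
  ∏ a : α, if a ∈ H then p else 1 - p

/-- Weights of the uniform distribution on a finite type. -/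
noncomputable def unifW (α : Type*) [Fintype α] : α → ℝ := fun _ => (Fintype.card α : ℝ)⁻¹

/-- Geometric mean of the class sizes. -/
noncomputable def geoMean {d : ℕ} (n : Fin d → ℕ) : ℝ :=
  (∏ i, (n i : ℝ)) ^ (1 / (d : ℝ))

/-- Sum of the class sizes. -/
def sumSizes {d : ℕ} (n : Fin d → ℕ) : ℝ := ∑ i, (n i : ℝ)

/-- The outcome space of the random `d`-word model: an assignment of one of `k` letters
to every vertex. -/
abbrev WordOmega {d : ℕ} (n : Fin d → ℕ) (k : ℕ) := (Σ i : Fin d, Fin (n i)) → Fin k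

/-- The hyper-graph associated with a letter assignment: an edge is present iff all of its
vertices receive the same letter. -/
noncomputable def wordGraph {d : ℕ} {n : Fin d → ℕ} {k : ℕ} (ω : WordOmega n k) : HG n :=
  Finset.univ.filter (fun e : Edge n => ∀ i j : Fin d, ω ⟨i, e i⟩ = ω ⟨j, e j⟩)

/-- The set of edges of `H` sharing no vertex with any other edge of `H`. -/
noncomputable def isolated {d : ℕ} {n : Fin d → ℕ} (H : HG n) : HG n :=
  H.filter (fun e => ∀ f ∈ H, f ≠ e → ∀ i, e i ≠ f i)

/-- Length of a longest chain among the points `x 0, …, x (m-1)` of `ℝ^d` under the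
componentwise strict order. -/
noncomputable def cubeChain (d m : ℕ) (x : Fin m → Fin d → ℝ) : ℕ :=
  ((Finset.univ : Finset (Finset (Fin m))).filter
    (fun S => ∀ a ∈ S, ∀ b ∈ S, a ≠ b →
      (∀ i, x a i < x b i) ∨ (∀ i, x b i < x a i))).sup Finset.card

/-- The unit cube `[0,1]^d`, to the `m`-th power. -/
def unitCube (d m : ℕ) : Set (Fin m → Fin d → ℝ) := {x | ∀ a i, x a i ∈ Set.Icc (0 : ℝ) 1}

/-- `c` is the Bollobás–Winkler constant in dimension `d`:
`E[H_d(m)] / m^(1/d) → c` as `m → ∞`, where `H_d(m)` is the length of a longest chain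
among `m` independent uniform random points in the unit cube `[0,1]^d`. -/
def IsBWConstant (d : ℕ) (c : ℝ) : Prop :=
  Filter.Tendsto
    (fun m : ℕ => (∫ x in unitCube d m, (cubeChain d m x : ℝ)) / (m : ℝ) ^ (1 / (d : ℝ)))
    Filter.atTop (nhds c)


section Word
variable {d : ℕ} {n : Fin d → ℕ} {k : ℕ}

/-- the iso-with-color-`c` event -/
def IsoC (ω : WordOmega n k) (e : Edge n) (c : Fin k) : Prop :=
  (∀ i, ω ⟨i, e i⟩ = c) ∧ ∀ (i : Fin d) (u : Fin (n i)), u ≠ e i → ω ⟨i, u⟩ ≠ c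

lemma card_filter_pi (s : ∀ v : (Σ i : Fin d, Fin (n i)), Finset (Fin k)) :
    (Finset.univ.filter (fun ω : WordOmega n k => ∀ v, ω v ∈ s v)).card = ∏ v, (s v).card := by
  rw [← Fintype.card_piFinset]
  congr 1; ext ω; simp [Fintype.mem_piFinset]

lemma prod_ite_one (m : ℕ) (x : Fin m) (a b : ℕ) :
    (∏ u : Fin m, if u = x then a else b) = a * b ^ (m - 1) := by
  rw [← Finset.mul_prod_erase Finset.univ _ (Finset.mem_univ x), if_pos rfl]
  congr 1
  rw [Finset.prod_congr rfl (fun u hu => if_neg (Finset.ne_of_mem_erase hu)),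
    Finset.prod_const, Finset.card_erase_of_mem (Finset.mem_univ x), Finset.card_univ,
    Fintype.card_fin]

lemma prod_ite_two (m : ℕ) {x y : Fin m} (hxy : x ≠ y) (a b c : ℕ) :
    (∏ u : Fin m, if u = x then a else if u = y then b else c) = a * b * c ^ (m - 2) := by
  rw [← Finset.mul_prod_erase Finset.univ _ (Finset.mem_univ x), if_pos rfl]
  rw [← Finset.mul_prod_erase _ _ (Finset.mem_erase.2 ⟨Ne.symm hxy, Finset.mem_univ y⟩),
    if_neg (Ne.symm hxy), if_pos rfl, ← mul_assoc]
  congr 1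
  rw [Finset.prod_congr rfl (fun u hu => ?_), Finset.prod_const,
    Finset.card_erase_of_mem (Finset.mem_erase.2 ⟨Ne.symm hxy, Finset.mem_univ y⟩),
    Finset.card_erase_of_mem (Finset.mem_univ x), Finset.card_univ, Fintype.card_fin]
  · rfl
  · have h1 := Finset.ne_of_mem_erase hu
    have h2 := Finset.ne_of_mem_erase (Finset.mem_of_mem_erase hu)
    rw [if_neg h2, if_neg h1]

lemma isoC_color_eq (hd : 0 < d) {ω : WordOmega n k} {e : Edge n} {c c' : Fin k}
    (h : IsoC ω e c) (h' : IsoC ω e c') : c = c' := by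
  exact (h.1 ⟨0, hd⟩).symm.trans (h'.1 ⟨0, hd⟩)

lemma isoC_ne_colors (hd : 0 < d) {ω : WordOmega n k} {e f : Edge n} {c c' : Fin k}
    (hef : ∀ i, e i ≠ f i) (h : IsoC ω e c) (h' : IsoC ω f c') : c ≠ c' := by
  intro hcc
  apply h.2 ⟨0, hd⟩ (f ⟨0, hd⟩) (Ne.symm (hef ⟨0, hd⟩))
  rw [h'.1 ⟨0, hd⟩, hcc]

lemma mem_wordGraph_iff (hd : 0 < d) (ω : WordOmega n k) (e : Edge n) :
    e ∈ wordGraph ω ↔ ∃ c, ∀ i, ω ⟨i, e i⟩ = c := by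
  simp only [wordGraph, Finset.mem_filter, Finset.mem_univ, true_and]
  constructor
  · intro h; exact ⟨ω ⟨⟨0, hd⟩, e ⟨0, hd⟩⟩, fun i => h i ⟨0, hd⟩⟩
  · rintro ⟨c, hc⟩ i j; rw [hc i, hc j]

lemma mem_isolated_iff (hd : 2 ≤ d) (ω : WordOmega n k) (e : Edge n) :
    e ∈ isolated (wordGraph ω) ↔ ∃ c, IsoC ω e c := by
  have hd0 : 0 < d := by omega
  simp only [isolated, Finset.mem_filter]
  constructor
  · rintro ⟨he, hiso⟩
    obtain ⟨c, hc⟩ := (mem_wordGraph_iff hd0 ω e).1 he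
    refine ⟨c, hc, fun i u hu hωu => ?_⟩
    set f : Edge n := Function.update e i u with hf
    have hfi : f i = u := Function.update_self i u e
    have hfj : ∀ j, j ≠ i → f j = e j := fun j hj => Function.update_of_ne hj u e
    have hfmono : f ∈ wordGraph ω := by
      refine (mem_wordGraph_iff hd0 ω f).2 ⟨c, fun j => ?_⟩
      by_cases hji : j = i
      · subst hji; rw [hfi]; exact hωu
      · rw [hfj j hji]; exact hc j
    have hfe : f ≠ e := by
      intro h; apply hu; rw [← hfi, h]
    -- pick j ≠ i
    obtain ⟨j, hj⟩ : ∃ j : Fin d, j ≠ i := by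
      rcases Decidable.eq_or_ne i ⟨0, hd0⟩ with h | h
      · exact ⟨⟨1, by omega⟩, by subst h; simp [Fin.ext_iff]⟩
      · exact ⟨⟨0, hd0⟩, Ne.symm h⟩
    exact hiso f hfmono hfe j (by rw [hfj j hj])
  · rintro ⟨c, hc, havoid⟩
    have he : e ∈ wordGraph ω := (mem_wordGraph_iff hd0 ω e).2 ⟨c, hc⟩
    refine ⟨he, fun f hf hfe i hef => ?_⟩
    obtain ⟨j, hj⟩ := Function.ne_iff.1 hfe
    obtain ⟨c', hc'⟩ := (mem_wordGraph_iff hd0 ω f).1 hf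
    have h1 : c' = c := by rw [← hc' i, ← hef, hc i]
    exact havoid j (f j) hj (by rw [hc' j, h1])

lemma card_monoC (e : Edge n) (c : Fin k) :
    (Finset.univ.filter (fun ω : WordOmega n k => ∀ i, ω ⟨i, e i⟩ = c)).card
      = ∏ i, k ^ (n i - 1) := by
  have heq : (Finset.univ.filter (fun ω : WordOmega n k => ∀ i, ω ⟨i, e i⟩ = c))
      = Finset.univ.filter (fun ω : WordOmega n k =>
          ∀ v : (Σ i : Fin d, Fin (n i)),
            ω v ∈ (if v.2 = e v.1 then ({c} : Finset (Fin k)) else Finset.univ)) := by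
    ext ω
    simp only [Finset.mem_filter, Finset.mem_univ, true_and]
    constructor
    · rintro h ⟨i, u⟩
      show ω ⟨i, u⟩ ∈ (if u = e i then ({c} : Finset (Fin k)) else Finset.univ)
      by_cases hu : u = e i
      · rw [if_pos hu, Finset.mem_singleton]; subst hu; exact h i
      · rw [if_neg hu]; exact Finset.mem_univ _
    · intro h i
      have := h ⟨i, e i⟩
      rw [if_pos rfl, Finset.mem_singleton] at this
      exact this
  rw [heq, card_filter_pi, ← Finset.univ_sigma_univ, Finset.prod_sigma]
  refine Finset.prod_congr rfl (fun i _ => ?_)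
  have : ∀ u : Fin (n i),
      ((if u = e i then ({c} : Finset (Fin k)) else Finset.univ)).card
        = if u = e i then 1 else k := by
    intro u; split_ifs <;> simp
  rw [Finset.prod_congr rfl (fun u _ => this u), prod_ite_one (n i) (e i) 1 k, one_mul]

lemma card_isoC (e : Edge n) (c : Fin k) :
    (Finset.univ.filter (fun ω : WordOmega n k => IsoC ω e c)).card
      = ∏ i, (k - 1) ^ (n i - 1) := by
  have heq : (Finset.univ.filter (fun ω : WordOmega n k => IsoC ω e c))
      = Finset.univ.filter (fun ω : WordOmega n k =>
          ∀ v : (Σ i : Fin d, Fin (n i)),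
            ω v ∈ (if v.2 = e v.1 then ({c} : Finset (Fin k)) else {c}ᶜ)) := by
    ext ω
    simp only [Finset.mem_filter, Finset.mem_univ, true_and]
    constructor
    · rintro ⟨h1, h2⟩ ⟨i, u⟩
      show ω ⟨i, u⟩ ∈ (if u = e i then ({c} : Finset (Fin k)) else {c}ᶜ)
      by_cases hu : u = e i
      · rw [if_pos hu, Finset.mem_singleton]; subst hu; exact h1 i
      · rw [if_neg hu]; simpa using h2 i u hu
    · intro h
      constructor
      · intro i
        have := h ⟨i, e i⟩
        rw [if_pos rfl, Finset.mem_singleton] at this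
        exact this
      · intro i u hu
        have := h ⟨i, u⟩
        rw [if_neg hu] at this
        simpa using this
  rw [heq, card_filter_pi, ← Finset.univ_sigma_univ, Finset.prod_sigma]
  refine Finset.prod_congr rfl (fun i _ => ?_)
  have : ∀ u : Fin (n i),
      ((if u = e i then ({c} : Finset (Fin k)) else {c}ᶜ)).card
        = if u = e i then 1 else k - 1 := by
    intro u; split_ifs <;> simp [Finset.card_compl]
  rw [Finset.prod_congr rfl (fun u _ => this u), prod_ite_one (n i) (e i) 1 (k-1), one_mul]

lemma card_pairC {e f : Edge n} (hef : ∀ i, e i ≠ f i) {c c' : Fin k} (hcc : c ≠ c') :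
    (Finset.univ.filter (fun ω : WordOmega n k => IsoC ω e c ∧ IsoC ω f c')).card
      = ∏ i, (k - 2) ^ (n i - 2) := by
  have heq : (Finset.univ.filter (fun ω : WordOmega n k => IsoC ω e c ∧ IsoC ω f c'))
      = Finset.univ.filter (fun ω : WordOmega n k =>
          ∀ v : (Σ i : Fin d, Fin (n i)),
            ω v ∈ (if v.2 = e v.1 then ({c} : Finset (Fin k))
              else if v.2 = f v.1 then {c'} else ({c, c'} : Finset (Fin k))ᶜ)) := by
    ext ω
    simp only [Finset.mem_filter, Finset.mem_univ, true_and]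
    constructor
    · rintro ⟨⟨h1, h2⟩, ⟨h3, h4⟩⟩ ⟨i, u⟩
      show ω ⟨i, u⟩ ∈ (if u = e i then ({c} : Finset (Fin k))
        else if u = f i then {c'} else ({c, c'} : Finset (Fin k))ᶜ)
      by_cases hu : u = e i
      · rw [if_pos hu, Finset.mem_singleton]; subst hu; exact h1 i
      · rw [if_neg hu]
        by_cases hu' : u = f i
        · rw [if_pos hu', Finset.mem_singleton]; subst hu'; exact h3 i
        · rw [if_neg hu']
          simp only [Finset.mem_compl, Finset.mem_insert, Finset.mem_singleton]
          push_neg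
          exact ⟨h2 i u hu, h4 i u hu'⟩
    · intro h
      have hval : ∀ (i : Fin d) (u : Fin (n i)),
          ω ⟨i, u⟩ ∈ (if u = e i then ({c} : Finset (Fin k))
            else if u = f i then {c'} else ({c, c'} : Finset (Fin k))ᶜ) :=
        fun i u => h ⟨i, u⟩
      constructor
      · constructor
        · intro i
          have := hval i (e i); rw [if_pos rfl, Finset.mem_singleton] at this; exact this
        · intro i u hu
          have := hval i u; rw [if_neg hu] at this
          by_cases hu' : u = f i
          · rw [if_pos hu', Finset.mem_singleton] at this
            rw [this]; exact Ne.symm hcc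
          · rw [if_neg hu'] at this
            simp only [Finset.mem_compl, Finset.mem_insert, Finset.mem_singleton] at this
            push_neg at this; exact this.1
      · constructor
        · intro i
          have := hval i (f i)
          rw [if_neg (Ne.symm (hef i)), if_pos rfl, Finset.mem_singleton] at this; exact this
        · intro i u hu
          have := hval i u
          by_cases hu' : u = e i
          · rw [if_pos hu', Finset.mem_singleton] at this
            rw [this]; exact hcc
          · rw [if_neg hu', if_neg hu] at this
            simp only [Finset.mem_compl, Finset.mem_insert, Finset.mem_singleton] at this
            push_neg at this; exact this.2
  rw [heq, card_filter_pi, ← Finset.univ_sigma_univ, Finset.prod_sigma]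
  refine Finset.prod_congr rfl (fun i _ => ?_)
  have hcard2 : ({c, c'} : Finset (Fin k)).card = 2 := Finset.card_pair hcc
  have : ∀ u : Fin (n i),
      ((if u = e i then ({c} : Finset (Fin k))
        else if u = f i then {c'} else ({c, c'} : Finset (Fin k))ᶜ)).card
        = if u = e i then 1 else if u = f i then 1 else k - 2 := by
    intro u
    split_ifs
    · simp
    · simp
    · rw [Finset.card_compl, hcard2, Fintype.card_fin]
  rw [Finset.prod_congr rfl (fun u _ => this u), prod_ite_two (n i) (hef i) 1 1 (k-2),
    one_mul, one_mul]

lemma card_mono (hd : 0 < d) (e : Edge n) :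
    (Finset.univ.filter (fun ω : WordOmega n k => e ∈ wordGraph ω)).card
      = k * ∏ i, k ^ (n i - 1) := by
  have heq : (Finset.univ.filter (fun ω : WordOmega n k => e ∈ wordGraph ω))
      = Finset.univ.biUnion (fun c : Fin k =>
          Finset.univ.filter (fun ω : WordOmega n k => ∀ i, ω ⟨i, e i⟩ = c)) := by
    ext ω
    simp only [Finset.mem_biUnion, Finset.mem_univ, true_and, Finset.mem_filter,
      mem_wordGraph_iff hd]
  rw [heq, Finset.card_biUnion]
  · rw [Finset.sum_congr rfl (fun c _ => card_monoC e c), Finset.sum_const, Finset.card_univ,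
      Fintype.card_fin, smul_eq_mul]
  · intro c _ c' _ hcc
    rw [Function.onFun, Finset.disjoint_left]
    intro ω h1 h2
    simp only [Finset.mem_filter] at h1 h2
    exact hcc ((h1.2 ⟨0, hd⟩).symm.trans (h2.2 ⟨0, hd⟩))

lemma card_iso (hd : 2 ≤ d) (e : Edge n) :
    (Finset.univ.filter (fun ω : WordOmega n k => e ∈ isolated (wordGraph ω))).card
      = k * ∏ i, (k - 1) ^ (n i - 1) := by
  have hd0 : 0 < d := by omega
  have heq : (Finset.univ.filter (fun ω : WordOmega n k => e ∈ isolated (wordGraph ω)))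
      = Finset.univ.biUnion (fun c : Fin k =>
          Finset.univ.filter (fun ω : WordOmega n k => IsoC ω e c)) := by
    ext ω
    simp only [Finset.mem_biUnion, Finset.mem_univ, true_and, Finset.mem_filter,
      mem_isolated_iff hd]
  rw [heq, Finset.card_biUnion]
  · rw [Finset.sum_congr rfl (fun c _ => card_isoC e c), Finset.sum_const, Finset.card_univ,
      Fintype.card_fin, smul_eq_mul]
  · intro c _ c' _ hcc
    rw [Function.onFun, Finset.disjoint_left]
    intro ω h1 h2
    simp only [Finset.mem_filter] at h1 h2
    exact hcc (isoC_color_eq hd0 h1.2 h2.2)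

lemma card_pair (hd : 2 ≤ d) {e f : Edge n} (hef : ∀ i, e i ≠ f i) :
    (Finset.univ.filter (fun ω : WordOmega n k =>
        e ∈ isolated (wordGraph ω) ∧ f ∈ isolated (wordGraph ω))).card
      = (k * k - k) * ∏ i, (k - 2) ^ (n i - 2) := by
  have hd0 : 0 < d := by omega
  have heq : (Finset.univ.filter (fun ω : WordOmega n k =>
        e ∈ isolated (wordGraph ω) ∧ f ∈ isolated (wordGraph ω)))
      = (Finset.univ : Finset (Fin k)).offDiag.biUnion (fun p =>
          Finset.univ.filter (fun ω : WordOmega n k => IsoC ω e p.1 ∧ IsoC ω f p.2)) := by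
    ext ω
    simp only [Finset.mem_biUnion, Finset.mem_filter, Finset.mem_offDiag, Finset.mem_univ,
      true_and, mem_isolated_iff hd]
    constructor
    · rintro ⟨⟨c, hc⟩, ⟨c', hc'⟩⟩
      exact ⟨(c, c'), isoC_ne_colors hd0 hef hc hc', hc, hc'⟩
    · rintro ⟨⟨c, c'⟩, _, h1, h2⟩
      exact ⟨⟨c, h1⟩, ⟨c', h2⟩⟩
  rw [heq, Finset.card_biUnion]
  · rw [Finset.sum_congr rfl (fun p hp => card_pairC hef (Finset.mem_offDiag.1 hp).2.2),
      Finset.sum_const, Finset.offDiag_card, Finset.card_univ, Fintype.card_fin, smul_eq_mul]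
  · rintro ⟨c1, c1'⟩ _ ⟨c2, c2'⟩ _ hne
    rw [Function.onFun, Finset.disjoint_left]
    intro ω h1 h2
    simp only [Finset.mem_filter] at h1 h2
    apply hne
    rw [Prod.mk.injEq]
    exact ⟨isoC_color_eq hd0 h1.2.1 h2.2.1, isoC_color_eq hd0 h1.2.2 h2.2.2⟩

lemma card_pair_zero (hd : 2 ≤ d) {e f : Edge n} (hne : e ≠ f) (i₀ : Fin d) (hsh : e i₀ = f i₀) :
    (Finset.univ.filter (fun ω : WordOmega n k =>
        e ∈ isolated (wordGraph ω) ∧ f ∈ isolated (wordGraph ω))).card = 0 := by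
  have hd0 : 0 < d := by omega
  rw [Finset.card_eq_zero, Finset.filter_eq_empty_iff]
  rintro ω _ ⟨h1, h2⟩
  obtain ⟨c, hc⟩ := (mem_isolated_iff hd ω e).1 h1
  obtain ⟨c', hc'⟩ := (mem_isolated_iff hd ω f).1 h2
  have hcc : c = c' := by
    rw [← hc.1 i₀, ← hc'.1 i₀, hsh]
  obtain ⟨j, hj⟩ := Function.ne_iff.1 hne
  exact hc.2 j (f j) (Ne.symm hj) (by rw [hc'.1 j, hcc])

lemma sum_card_gen (P : WordOmega n k → Edge n → Prop) :
    ∑ ω : WordOmega n k, (Finset.univ.filter (P ω)).card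
      = ∑ e : Edge n, (Finset.univ.filter (fun ω : WordOmega n k => P ω e)).card := by
  simp only [Finset.card_filter]
  exact Finset.sum_comm

lemma card_isolated_eq (ω : WordOmega n k) :
    (isolated (wordGraph ω)).card
      = (Finset.univ.filter (fun e => e ∈ isolated (wordGraph ω))).card := by
  congr 1
  ext e
  simp

lemma card_wordGraph_eq (ω : WordOmega n k) :
    (wordGraph ω).card = (Finset.univ.filter (fun e => e ∈ wordGraph ω)).card := by
  congr 1; ext e; simp

lemma sum_card_wordGraph (hd : 0 < d) :
    ∑ ω : WordOmega n k, (wordGraph ω).card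
      = (∏ i, n i) * (k * ∏ i, k ^ (n i - 1)) := by
  simp only [card_wordGraph_eq, Finset.card_filter]
  rw [Finset.sum_comm]
  rw [Finset.sum_congr rfl (fun e _ =>
    (Finset.card_filter _ _).symm.trans (card_mono hd e)), Finset.sum_const, smul_eq_mul,
    Finset.card_univ]
  congr 1
  rw [Fintype.card_pi]
  simp

lemma sum_card_isolated (hd : 2 ≤ d) :
    ∑ ω : WordOmega n k, (isolated (wordGraph ω)).card
      = (∏ i, n i) * (k * ∏ i, (k - 1) ^ (n i - 1)) := by
  simp only [card_isolated_eq, Finset.card_filter]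
  rw [Finset.sum_comm]
  rw [Finset.sum_congr rfl (fun e _ =>
    (Finset.card_filter _ _).symm.trans (card_iso hd e)), Finset.sum_const, smul_eq_mul,
    Finset.card_univ]
  congr 1
  rw [Fintype.card_pi]
  simp

lemma sum_sq_isolated (hd : 2 ≤ d) :
    ∑ ω : WordOmega n k, ((isolated (wordGraph ω)).card) ^ 2
      ≤ (∏ i, n i) * (k * ∏ i, (k - 1) ^ (n i - 1))
        + (∏ i, n i) * (∏ i, n i) * ((k * k - k) * ∏ i, (k - 2) ^ (n i - 2)) := by
  classical
  set N : Edge n → Edge n → ℕ := fun e f =>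
    (Finset.univ.filter (fun ω : WordOmega n k =>
        e ∈ isolated (wordGraph ω) ∧ f ∈ isolated (wordGraph ω))).card with hN
  have key : ∑ ω : WordOmega n k, ((isolated (wordGraph ω)).card) ^ 2
      = ∑ e : Edge n, ∑ f : Edge n, N e f := by
    have h1 : ∀ ω : WordOmega n k, ((isolated (wordGraph ω)).card) ^ 2
        = ∑ e : Edge n, ∑ f : Edge n,
            (if e ∈ isolated (wordGraph ω) ∧ f ∈ isolated (wordGraph ω) then 1 else 0) := by
      intro ω
      rw [card_isolated_eq, Finset.card_filter, sq, Finset.sum_mul_sum]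
      refine Finset.sum_congr rfl (fun e _ => Finset.sum_congr rfl (fun f _ => ?_))
      split_ifs with h1 h2 h3 h4 <;> simp_all
    rw [Finset.sum_congr rfl (fun ω _ => h1 ω), Finset.sum_comm]
    refine Finset.sum_congr rfl (fun e _ => ?_)
    rw [Finset.sum_comm]
    exact Finset.sum_congr rfl (fun f _ => (Finset.card_filter _ _).symm)
  rw [key]
  have hsplit : ∀ e : Edge n, ∑ f : Edge n, N e f
      ≤ k * ∏ i, (k - 1) ^ (n i - 1)
        + (∏ i, n i) * ((k * k - k) * ∏ i, (k - 2) ^ (n i - 2)) := by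
    intro e
    rw [← Finset.add_sum_erase Finset.univ (N e) (Finset.mem_univ e)]
    have hdiag : N e e = k * ∏ i, (k - 1) ^ (n i - 1) := by
      rw [hN]
      simp only [and_self]
      exact card_iso hd e
    have hrest : ∑ f ∈ Finset.univ.erase e, N e f
        ≤ (∏ i, n i) * ((k * k - k) * ∏ i, (k - 2) ^ (n i - 2)) := by
      rw [← Finset.sum_filter_add_sum_filter_not (Finset.univ.erase e)
        (fun f => ∀ i, e i ≠ f i) (N e)]
      have hz : ∑ f ∈ (Finset.univ.erase e).filter (fun f => ¬ ∀ i, e i ≠ f i), N e f = 0 := by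
        refine Finset.sum_eq_zero (fun f hf => ?_)
        simp only [Finset.mem_filter, Finset.mem_erase] at hf
        obtain ⟨⟨hfe, _⟩, hsh⟩ := hf
        push_neg at hsh
        obtain ⟨i₀, hi₀⟩ := hsh
        exact card_pair_zero hd (Ne.symm hfe) i₀ (not_not.1 (by simpa using hi₀))
      rw [hz, add_zero]
      have hconst : ∀ f ∈ (Finset.univ.erase e).filter (fun f => ∀ i, e i ≠ f i),
          N e f = (k * k - k) * ∏ i, (k - 2) ^ (n i - 2) :=
        fun f hf => card_pair hd (Finset.mem_filter.1 hf).2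
      rw [Finset.sum_congr rfl hconst, Finset.sum_const, smul_eq_mul]
      apply Nat.mul_le_mul_right
      calc ((Finset.univ.erase e).filter (fun f => ∀ i, e i ≠ f i)).card
          ≤ (Finset.univ : Finset (Edge n)).card :=
            Finset.card_le_card (le_trans (Finset.filter_subset _ _) (Finset.erase_subset _ _))
        _ = ∏ i, n i := by rw [Finset.card_univ, Fintype.card_pi]; simp
    calc N e e + ∑ f ∈ Finset.univ.erase e, N e f
        ≤ N e e + (∏ i, n i) * ((k * k - k) * ∏ i, (k - 2) ^ (n i - 2)) :=
          Nat.add_le_add_left hrest _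
      _ = _ := by rw [hdiag]
  calc ∑ e : Edge n, ∑ f : Edge n, N e f
      ≤ ∑ _e : Edge n, (k * ∏ i, (k - 1) ^ (n i - 1)
          + (∏ i, n i) * ((k * k - k) * ∏ i, (k - 2) ^ (n i - 2))) :=
        Finset.sum_le_sum (fun e _ => hsplit e)
    _ = _ := by
        rw [Finset.sum_const, smul_eq_mul, Finset.card_univ]
        have hce : Fintype.card (Edge n) = ∏ i, n i := by rw [Fintype.card_pi]; simp
        rw [hce]; ring

lemma isolated_card_le_one (i₀ : Fin d) (h1 : n i₀ < 2) (ω : WordOmega n k) :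
    (isolated (wordGraph ω)).card ≤ 1 := by
  rw [Finset.card_le_one]
  intro e he f hf
  by_contra hne
  have hfH : f ∈ wordGraph ω := Finset.mem_of_mem_filter f hf
  have hcond := (Finset.mem_filter.1 he).2
  have := hcond f hfH (Ne.symm hne) i₀
  apply this
  have h1' : n i₀ = 1 := by
    have : 0 < n i₀ := Fin.pos (e i₀)
    omega
  have he0 : (e i₀ : ℕ) = 0 := by have := (e i₀).2; omega
  have hf0 : (f i₀ : ℕ) = 0 := by have := (f i₀).2; omega
  exact Fin.ext (he0.trans hf0.symm)

lemma sum_sq_isolated_degen (i₀ : Fin d) (h1 : n i₀ < 2) :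
    ∑ ω : WordOmega n k, ((isolated (wordGraph ω)).card) ^ 2
      = ∑ ω : WordOmega n k, (isolated (wordGraph ω)).card := by
  refine Finset.sum_congr rfl (fun ω _ => ?_)
  have := isolated_card_le_one i₀ h1 ω
  interval_cases h : (isolated (wordGraph ω)).card <;> simp

lemma chebyshevW {α : Type*} [Fintype α] (w X : α → ℝ) (hw : ∀ a, 0 ≤ w a)
    (h1 : ∑ a, w a = 1) (μ σ2 : ℝ) (hμ : μ = wExp w X)
    (hσ : wExp w (fun a => X a ^ 2) ≤ σ2 + μ ^ 2) (t : ℝ) (ht : 0 < t) :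
    wProb w {a | t ≤ X a - μ} ≤ σ2 / t ^ 2 := by
  have hvar : wExp w (fun a => (X a - μ) ^ 2) ≤ σ2 := by
    have hexp : wExp w (fun a => (X a - μ) ^ 2)
        = wExp w (fun a => X a ^ 2) - 2 * μ * wExp w X + μ ^ 2 * ∑ a, w a := by
      simp only [wExp, Finset.mul_sum, ← Finset.sum_sub_distrib, ← Finset.sum_add_distrib]
      exact Finset.sum_congr rfl (fun a _ => by ring)
    rw [hexp, h1, ← hμ]
    nlinarith [hσ]
  have key : wProb w {a | t ≤ X a - μ} * t ^ 2 ≤ σ2 := by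
    refine le_trans ?_ hvar
    unfold wProb wExp
    rw [Finset.sum_mul]
    refine le_trans (Finset.sum_le_sum (fun a ha => ?_))
      (Finset.sum_le_sum_of_subset_of_nonneg (Finset.filter_subset _ _)
        (fun a _ _ => mul_nonneg (hw a) (sq_nonneg _)))
    simp only [Finset.mem_filter, Set.mem_setOf_eq] at ha
    have h2 : t ^ 2 ≤ (X a - μ) ^ 2 := by nlinarith [ha.2]
    exact mul_le_mul_of_nonneg_left h2 (hw a)
  rw [le_div_iff₀ (by positivity)]
  exact key



/-- Expectations of `|E|`, `|E'|` and `|E ∖ E'|` for the random `d`-word model, and a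
Chebyshev-type bound for `|E'|`. -/
theorem word_edge_counts (d : ℕ) (hd : 2 ≤ d) (k : ℕ) (hk : 3 ≤ k)
    (n : Fin d → ℕ) (hn : ∀ i, 0 < n i) :
    let N : ℝ := geoMean n
    let S : ℝ := sumSizes n
    let muE : ℝ := wExp (unifW (WordOmega n k)) (fun ω => ((wordGraph ω).card : ℝ))
    let muE' : ℝ :=
      wExp (unifW (WordOmega n k)) (fun ω => ((isolated (wordGraph ω)).card : ℝ))
    muE = N ^ d / (k : ℝ) ^ (d - 1) ∧
    (muE' = N ^ d / (k : ℝ) ^ (d - 1) * (((k : ℝ) - 1) / (k : ℝ)) ^ (S - (d : ℝ)) ∧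
      N ^ d / (k : ℝ) ^ (d - 1) * (1 - S / (k : ℝ)) ≤ muE') ∧
    wExp (unifW (WordOmega n k))
        (fun ω => ((wordGraph ω \ isolated (wordGraph ω)).card : ℝ)) ≤
      N ^ d * S / (k : ℝ) ^ d ∧
    ∀ η : ℝ, 0 < η →
      wProb (unifW (WordOmega n k))
          {ω | η * muE' ≤ ((isolated (wordGraph ω)).card : ℝ) - muE'} ≤
        1 / (η ^ 2 * muE') +
          1 / η ^ 2 * ((((k : ℝ) - 1) / ((k : ℝ) - 2)) ^ (2 * d - 1) - 1) := by
  intro N S muE muE'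
  have hd0 : 0 < d := by omega
  set V : ℕ := ∑ i, n i with hV
  set s : ℕ := ∑ i, (n i - 1) with hs
  set m : ℕ := ∑ i, (n i - 2) with hm
  set K : ℝ := (k : ℝ) with hKdef
  have hK3 : (3:ℝ) ≤ K := by rw [hKdef]; exact_mod_cast hk
  have hK0 : (0:ℝ) < K := by linarith
  have hK1 : (0:ℝ) < K - 1 := by linarith
  have hK2 : (0:ℝ) < K - 2 := by linarith
  set A : ℝ := ∏ i, (n i : ℝ) with hA
  have hA0 : 0 < A := Finset.prod_pos (fun i _ => by exact_mod_cast hn i)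
  have hNA : N ^ d = A := by
    show (geoMean n) ^ d = A
    rw [geoMean, one_div, Real.rpow_inv_natCast_pow hA0.le (by omega)]
  have hVds : V = d + s := by
    have h1 : ∀ i ∈ Finset.univ, n i = 1 + (n i - 1) := fun i _ => by have := hn i; omega
    rw [hV, hs, Finset.sum_congr rfl h1, Finset.sum_add_distrib, Finset.sum_const,
      Finset.card_univ, Fintype.card_fin, smul_eq_mul, mul_one]
  have hsV : s ≤ V := by
    rw [hV, hs]; exact Finset.sum_le_sum (fun i _ => Nat.sub_le _ _)
  have hSV : S = (V : ℝ) := by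
    show sumSizes n = _
    rw [sumSizes, hV]; push_cast; rfl
  have hSd : S - (d:ℝ) = (s : ℝ) := by
    rw [hSV, hVds]; push_cast; ring
  have hcardΩ : (Fintype.card (WordOmega n k) : ℝ) = K ^ V := by
    rw [show Fintype.card (WordOmega n k) = k ^ V by
      rw [Fintype.card_fun, Fintype.card_fin, Fintype.card_sigma]
      congr 1
      exact Finset.sum_congr rfl (fun i _ => Fintype.card_fin _)]
    push_cast; rfl
  have hC0 : (0:ℝ) < K ^ V := pow_pos hK0 _
  have hwexp : ∀ f : WordOmega n k → ℝ,
      wExp (unifW (WordOmega n k)) f = (∑ ω, f ω) / K ^ V := by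
    intro f
    rw [wExp]
    rw [Finset.sum_congr rfl (fun ω _ => by rw [unifW, hcardΩ])]
    rw [← Finset.mul_sum, inv_mul_eq_div]
  have hKne : K ≠ 0 := ne_of_gt hK0
  have hck1 : ((k - 1 : ℕ) : ℝ) = K - 1 := by
    rw [Nat.cast_sub (by omega)]; push_cast; rfl
  have hck2 : ((k - 2 : ℕ) : ℝ) = K - 2 := by
    rw [Nat.cast_sub (by omega)]; push_cast; rfl
  have hckk : ((k * k - k : ℕ) : ℝ) = K * K - K := by
    rw [Nat.cast_sub (Nat.le_mul_of_pos_left k (by omega))]; push_cast; ring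
  have hsum1 : (∑ ω : WordOmega n k, ((wordGraph ω).card : ℝ)) = A * (K * K ^ s) := by
    calc ∑ ω : WordOmega n k, ((wordGraph ω).card : ℝ)
        = ((∑ ω : WordOmega n k, (wordGraph ω).card : ℕ) : ℝ) := by push_cast; rfl
      _ = _ := by
          rw [sum_card_wordGraph hd0]
          push_cast
          rw [Finset.prod_pow_eq_pow_sum]
  have hsum2 : (∑ ω : WordOmega n k, ((isolated (wordGraph ω)).card : ℝ))
      = A * (K * (K - 1) ^ s) := by
    calc ∑ ω : WordOmega n k, ((isolated (wordGraph ω)).card : ℝ)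
        = ((∑ ω : WordOmega n k, (isolated (wordGraph ω)).card : ℕ) : ℝ) := by push_cast; rfl
      _ = _ := by
          rw [sum_card_isolated hd]
          push_cast [hck1]
          rw [Finset.prod_pow_eq_pow_sum]
  have hpow1 : K ^ (1 + s) = K * K ^ s := by rw [pow_add, pow_one]
  have hpowV : K ^ V = K ^ (d - 1) * (K * K ^ s) := by
    rw [← hpow1, ← pow_add, hVds]; congr 1; omega
  have hmuE : muE = A / K ^ (d - 1) := by
    show wExp _ _ = _
    rw [hwexp, hsum1, hpowV]
    rw [mul_comm (K ^ (d-1)) _, ← div_div, mul_div_assoc]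
    rw [div_self (by positivity), mul_one]
  have hmuE' : muE' = A * (K * (K - 1) ^ s) / K ^ V := by
    show wExp _ _ = _
    rw [hwexp, hsum2]
  have hmuE'c : muE' = A / K ^ (d - 1) * ((K - 1) / K) ^ s := by
    rw [hmuE', hpowV, div_pow]
    field_simp
  have hmuE'pos : 0 < muE' := by
    rw [hmuE']
    exact div_pos (mul_pos hA0 (mul_pos hK0 (pow_pos hK1 _))) hC0
  have hbern : 1 - (s : ℝ) / K ≤ ((K - 1) / K) ^ s := by
    have h := one_add_mul_le_pow (a := -(1 / K))
      (by have h1 : 1 / K ≤ 1 := by rw [div_le_one hK0]; linarith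
          linarith) s
    have e1 : (1 + -(1 / K)) = (K - 1) / K := by
      rw [sub_div, div_self hKne]; ring
    rw [e1] at h
    calc 1 - (s : ℝ) / K = 1 + (s : ℝ) * (-(1 / K)) := by ring
      _ ≤ _ := h
  have hsS : (s : ℝ) ≤ S := by rw [hSV]; exact_mod_cast hsV
  have hmuE'def : muE' = wExp (unifW (WordOmega n k))
      (fun ω => ((isolated (wordGraph ω)).card : ℝ)) := rfl
  clear_value N S muE muE' V s m K A
  refine ⟨?_, ⟨?_, ?_⟩, ?_, ?_⟩
  · -- part 1
    rw [hmuE, hNA]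
  · -- part 2 equality
    rw [hNA, hSd, Real.rpow_natCast]
    exact hmuE'c
  · -- part 2 inequality
    rw [hNA, hmuE'c]
    have h3 : (s:ℝ)/K ≤ S/K := by gcongr
    have h1 : 1 - S / K ≤ ((K - 1)/K) ^ s := by
      calc 1 - S / K ≤ 1 - (s : ℝ) / K := by linarith
        _ ≤ _ := hbern
    have h2 : (0:ℝ) ≤ A / K ^ (d-1) := div_nonneg hA0.le (pow_nonneg hK0.le _)
    exact mul_le_mul_of_nonneg_left h1 h2
  · -- part 3
    rw [hwexp, hNA]
    have hdiffcast : ∀ ω : WordOmega n k,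
        ((wordGraph ω \ isolated (wordGraph ω)).card : ℝ)
          = ((wordGraph ω).card : ℝ) - ((isolated (wordGraph ω)).card : ℝ) := by
      intro ω
      have hsub : isolated (wordGraph ω) ⊆ wordGraph ω := Finset.filter_subset _ _
      rw [Finset.card_sdiff_of_subset hsub, Nat.cast_sub (Finset.card_le_card hsub)]
    rw [Finset.sum_congr rfl (fun ω _ => hdiffcast ω), Finset.sum_sub_distrib, hsum1, hsum2]
    have hAK0 : (0:ℝ) ≤ A / K ^ (d-1) := div_nonneg hA0.le (pow_nonneg hK0.le _)
    have e1 : (A * (K * K ^ s) - A * (K * (K - 1) ^ s)) / K ^ V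
        = A / K ^ (d - 1) * (1 - ((K - 1) / K) ^ s) := by
      rw [hpowV, div_pow]
      field_simp
    rw [e1]
    have e2 : 1 - ((K - 1) / K) ^ s ≤ (s : ℝ) / K := by linarith [hbern]
    have h3 : (s:ℝ)/K ≤ S/K := by gcongr
    calc A / K ^ (d - 1) * (1 - ((K - 1) / K) ^ s)
        ≤ A / K ^ (d - 1) * ((s : ℝ) / K) := mul_le_mul_of_nonneg_left e2 hAK0
      _ ≤ A / K ^ (d - 1) * (S / K) := mul_le_mul_of_nonneg_left h3 hAK0
      _ = A * S / K ^ d := by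
          rw [show d = (d - 1) + 1 by omega, pow_add, pow_one]
          field_simp
          rw [Nat.add_sub_cancel]; ring
  · -- part 4
    intro η hη
    set T : ℝ := ((K - 1) / (K - 2)) ^ (2 * d - 1) with hT
    have hT0 : (0:ℝ) ≤ T := pow_nonneg (div_nonneg hK1.le hK2.le) _
    have hμne : muE' ≠ 0 := ne_of_gt hmuE'pos
    have hsq : wExp (unifW (WordOmega n k))
        (fun ω => ((isolated (wordGraph ω)).card : ℝ) ^ 2) ≤ muE' + T * muE' ^ 2 := by
      rw [hwexp]
      have hcast : ∀ ω : WordOmega n k, ((isolated (wordGraph ω)).card : ℝ) ^ 2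
          = (((isolated (wordGraph ω)).card ^ 2 : ℕ) : ℝ) := fun ω => by push_cast; rfl
      rw [Finset.sum_congr rfl (fun ω _ => hcast ω), ← Nat.cast_sum]
      by_cases hreg : ∀ i, 2 ≤ n i
      · -- regular case
        have hVm : V = m + 2 * d := by
          have h1 : ∀ i ∈ Finset.univ, n i = (n i - 2) + 2 := fun i _ => by
            have := hreg i; omega
          rw [hV, hm, Finset.sum_congr rfl h1, Finset.sum_add_distrib, Finset.sum_const,
            Finset.card_univ, Fintype.card_fin, smul_eq_mul]
          ring
        obtain ⟨r, hr⟩ : ∃ r, 2 * d = r + 1 := ⟨2 * d - 1, by omega⟩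
        have hr1 : 2 * d - 1 = r := by omega
        have hbR : ((∑ ω : WordOmega n k, ((isolated (wordGraph ω)).card) ^ 2 : ℕ) : ℝ)
            ≤ A * (K * (K - 1) ^ s) + A * A * ((K * K - K) * (K - 2) ^ m) := by
          calc ((∑ ω : WordOmega n k, ((isolated (wordGraph ω)).card) ^ 2 : ℕ) : ℝ)
              ≤ (((∏ i, n i) * (k * ∏ i, (k - 1) ^ (n i - 1))
                  + (∏ i, n i) * (∏ i, n i)
                    * ((k * k - k) * ∏ i, (k - 2) ^ (n i - 2)) : ℕ) : ℝ) := by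
                exact_mod_cast sum_sq_isolated (n := n) (k := k) hd
            _ = _ := by
                push_cast [hck1, hck2, hckk]
                rw [Finset.prod_pow_eq_pow_sum, Finset.prod_pow_eq_pow_sum, hA, hs, hm, hKdef]
                try ring
        have core : (K * K - K) * (K - 2) ^ m * K ^ V ≤ T * (K * (K - 1) ^ s) ^ 2 := by
          obtain ⟨a, ha⟩ : ∃ a : ℝ, a = K - 1 := ⟨_, rfl⟩
          obtain ⟨b, hb⟩ : ∃ b : ℝ, b = K - 2 := ⟨_, rfl⟩
          have ha0 : 0 < a := by rw [ha]; exact hK1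
          have hb0 : 0 < b := by rw [hb]; exact hK2
          rw [hT, hr1, ← ha, ← hb, div_pow, div_mul_eq_mul_div, le_div_iff₀ (pow_pos hb0 r)]
          have eS : (K * a ^ s) ^ 2 = K ^ 2 * a ^ (2 * m + (r + 1)) := by
            rw [mul_pow, ← pow_mul, show s * 2 = 2 * m + (r + 1) by omega]
          rw [eS, hVm, hr]
          have h1 : (0:ℝ) ≤ K * b := mul_nonneg hK0.le hb0.le
          have h2 : K * b ≤ a ^ 2 := by
            rw [ha, hb]
            have he : (K - 1) ^ 2 - K * (K - 2) = 1 := by ring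
            linarith
          have h3 : (K * b) ^ (m + r) ≤ (a ^ 2) ^ (m + r) := pow_le_pow_left₀ h1 h2 _
          calc (K * K - K) * b ^ m * K ^ (m + (r + 1)) * b ^ r
              = (K ^ 2 * a) * (K * b) ^ (m + r) := by rw [ha]; ring
            _ ≤ (K ^ 2 * a) * (a ^ 2) ^ (m + r) :=
                mul_le_mul_of_nonneg_left h3 (mul_nonneg (pow_nonneg hK0.le 2) ha0.le)
            _ = a ^ r * (K ^ 2 * a ^ (2 * m + (r + 1))) := by ring
        have core2 : A * A * ((K * K - K) * (K - 2) ^ m) / K ^ V ≤ T * muE' ^ 2 := by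
          have hμ2 : muE' ^ 2 = A ^ 2 * (K * (K - 1) ^ s) ^ 2 / (K ^ V) ^ 2 := by
            rw [hmuE', div_pow, mul_pow]
          rw [hμ2]
          calc A * A * ((K * K - K) * (K - 2) ^ m) / K ^ V
              = A ^ 2 * ((K * K - K) * (K - 2) ^ m * K ^ V) / (K ^ V) ^ 2 := by
                field_simp
            _ ≤ A ^ 2 * (T * (K * (K - 1) ^ s) ^ 2) / (K ^ V) ^ 2 :=
                div_le_div_of_nonneg_right
                  (mul_le_mul_of_nonneg_left core (sq_nonneg A)) (pow_nonneg hC0.le 2)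
            _ = T * (A ^ 2 * (K * (K - 1) ^ s) ^ 2 / (K ^ V) ^ 2) := by ring
        calc ((∑ ω : WordOmega n k, ((isolated (wordGraph ω)).card) ^ 2 : ℕ) : ℝ) / K ^ V
            ≤ (A * (K * (K - 1) ^ s) + A * A * ((K * K - K) * (K - 2) ^ m)) / K ^ V := by
              exact div_le_div_of_nonneg_right hbR hC0.le
          _ = A * (K * (K - 1) ^ s) / K ^ V
              + A * A * ((K * K - K) * (K - 2) ^ m) / K ^ V := by rw [add_div]
          _ ≤ muE' + T * muE' ^ 2 := by
              rw [← hmuE']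
              exact add_le_add_right core2 _
      · -- degenerate case
        push_neg at hreg
        obtain ⟨i₀, hi₀⟩ := hreg
        rw [sum_sq_isolated_degen i₀ hi₀, Nat.cast_sum, hsum2, ← hmuE']
        have : (0:ℝ) ≤ T * muE' ^ 2 := mul_nonneg hT0 (sq_nonneg _)
        linarith
    have hwnn : ∀ a : WordOmega n k, 0 ≤ unifW (WordOmega n k) a := fun a =>
      inv_nonneg.2 (Nat.cast_nonneg _)
    have hwsum : ∑ a : WordOmega n k, unifW (WordOmega n k) a = 1 := by
      show ∑ _a : WordOmega n k, ((Fintype.card (WordOmega n k) : ℝ))⁻¹ = 1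
      rw [Finset.sum_const, Finset.card_univ, nsmul_eq_mul, mul_inv_cancel₀]
      rw [hcardΩ]
      exact ne_of_gt hC0
    have happ := chebyshevW (unifW (WordOmega n k))
        (fun ω => ((isolated (wordGraph ω)).card : ℝ)) hwnn hwsum muE'
        (muE' + (T - 1) * muE' ^ 2) hmuE'def
        (le_trans hsq (le_of_eq (by ring))) (η * muE') (mul_pos hη hmuE'pos)
    calc wProb (unifW (WordOmega n k))
          {ω | η * muE' ≤ ((isolated (wordGraph ω)).card : ℝ) - muE'}
        ≤ (muE' + (T - 1) * muE' ^ 2) / (η * muE') ^ 2 := happ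
      _ = 1 / (η ^ 2 * muE') + 1 / η ^ 2 * (T - 1) := by
          field_simp
end Word
end

section
/- The symmetric binomial random graph model has concentration constant 1/4: if G is chosen according to S(K_{n,n},p) and Med is any median of L(G), then for all s ≥ 0, P(L(G) ≤ (1−s)Med) ≤ 2 exp(−s² Med /4) and P(L(G) ≥ (1+s)Med) ≤ 2 exp(−(s²/(1+s)) Med /4). -/
set_option linter.unusedSectionVars false
set_option linter.unusedVariables false
set_option linter.deprecated false
set_option linter.unnecessarySimpa false
set_option maxHeartbeats 1000000


open Finset
open scoped Classical BigOperators

/-- A bipartite graph on color classes `[n]`, `[n]`, identified with its edge set. -/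
abbrev BG (n : ℕ) := Finset (Fin n × Fin n)

/-- A finite set of edges is a non-crossing matching iff any two distinct edges of it are
strictly increasing in both coordinates (equivalently: pairwise node-disjoint and totally
ordered by the componentwise partial order). -/
def BNonCrossing {n : ℕ} (M : BG n) : Prop :=
  ∀ e ∈ M, ∀ f ∈ M, e ≠ f → (e.1 < f.1 ∧ e.2 < f.2) ∨ (f.1 < e.1 ∧ f.2 < e.2)

/-- `BL G` is the maximum size of a non-crossing matching contained in `G`. -/
noncomputable def BL {n : ℕ} (G : BG n) : ℕ :=
  (G.powerset.filter BNonCrossing).sup Finset.card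

/-- The index set of the symmetric binomial model: pairs `(i,j)` with `i < j`. -/
abbrev SymPairs (n : ℕ) := {q : Fin n × Fin n // q.1 < q.2}

/-- Outcomes of the symmetric binomial model: the chosen set of pairs. -/
abbrev SymOmega (n : ℕ) := Finset (SymPairs n)

/-- The bipartite graph determined by an outcome of the symmetric binomial model:
for every chosen pair `(i,j)` (with `i < j`) both edges `(i,j)` and `(j,i)` are present. -/
noncomputable def symGraph {n : ℕ} (F : SymOmega n) : BG n :=
  F.image (fun q => q.1) ∪ F.image (fun q => (q.1.2, q.1.1))

/-- The bipartite graph determined by an outcome of the oriented symmetric binomial model: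
only the edges `(i,j)` with `i < j` are present. -/
noncomputable def orientGraph {n : ℕ} (F : SymOmega n) : BG n := F.image (fun q => q.1)

/-- The index set of the anti-symmetric binomial model on `[2n] × [2n]`: the pair of edges
`{(i,j), (2n+1-i, 2n+1-j)}` is represented by its member whose first coordinate lies in
the first half. -/
abbrev AsymPairs (n : ℕ) := {q : Fin (2 * n) × Fin (2 * n) // (q.1.1 : ℕ) < n}

/-- Outcomes of the anti-symmetric binomial model. -/
abbrev AsymOmega (n : ℕ) := Finset (AsymPairs n)

/-- The bipartite graph determined by an outcome of the anti-symmetric binomial model: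
for every chosen representative `(i,j)`, the edges `(i,j)` and `(2n+1-i, 2n+1-j)`
are present. -/
noncomputable def asymGraph {n : ℕ} (F : AsymOmega n) : BG (2 * n) :=
  F.image (fun q => q.1) ∪ F.image (fun q => (q.1.1.rev, q.1.2.rev))

/-- The set of edges of `G` sharing no vertex with any other edge of `G`. -/
noncomputable def bIsolated {n : ℕ} (G : BG n) : BG n :=
  G.filter (fun e => ∀ f ∈ G, f ≠ e → e.1 ≠ f.1 ∧ e.2 ≠ f.2)

/-- `E[L(S(K_{n,n},p))]`, the expected maximum size of a non-crossing matching in the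
symmetric binomial random graph model. -/
noncomputable def symLExp (n : ℕ) (p : ℝ) : ℝ :=
  wExp (binomW p : SymOmega n → ℝ) (fun F => (BL (symGraph F) : ℝ))

/-- `E[L(A(K_{2n,2n},p))]`, the expected maximum size of a non-crossing matching in the
anti-symmetric binomial random graph model. -/
noncomputable def asymLExp (n : ℕ) (p : ℝ) : ℝ :=
  wExp (binomW p : AsymOmega n → ℝ) (fun F => (BL (asymGraph F) : ℝ))


namespace TalagrandAux
variable {ι : Type*} [Fintype ι] [DecidableEq ι]



/-- product weight on subsets of `s` -/
noncomputable def W (p : ℝ) (s : Finset ι) (ω : Finset ι) : ℝ :=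
  ∏ j ∈ s, if j ∈ ω then p else 1 - p

noncomputable def chi (ω σ : Finset ι) : ι → ℝ := fun j => if (j ∈ ω ↔ j ∈ σ) then 0 else 1

def USet (A : Finset (Finset ι)) (ω : Finset ι) : Set (ι → ℝ) :=
  {ν | ∃ σ ∈ A, ∀ j, chi ω σ j ≤ ν j ∧ ν j ≤ 1}

noncomputable def hullU (A : Finset (Finset ι)) (ω : Finset ι) : Set (ι → ℝ) :=
  convexHull ℝ (USet A ω)

noncomputable def Phi (ν : ι → ℝ) : ℝ := ∑ j, (ν j) ^ 2

noncomputable def D2 (A : Finset (Finset ι)) (ω : Finset ι) : ℝ :=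
  sInf (Phi '' hullU A ω)

lemma chi_nonneg (ω σ : Finset ι) (j : ι) : 0 ≤ chi ω σ j := by
  unfold chi; split <;> norm_num

lemma chi_le_one (ω σ : Finset ι) (j : ι) : chi ω σ j ≤ 1 := by
  unfold chi; split <;> norm_num

lemma Phi_nonneg (ν : ι → ℝ) : 0 ≤ Phi ν := Finset.sum_nonneg fun j _ => sq_nonneg _

lemma chi_mem_USet {A : Finset (Finset ι)} {ω σ : Finset ι} (h : σ ∈ A) :
    chi ω σ ∈ USet A ω := ⟨σ, h, fun j => ⟨le_refl _, chi_le_one _ _ _⟩⟩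

lemma USet_nonempty {A : Finset (Finset ι)} (hA : A.Nonempty) (ω : Finset ι) :
    (USet A ω).Nonempty := by
  obtain ⟨σ, hσ⟩ := hA; exact ⟨chi ω σ, chi_mem_USet hσ⟩

lemma hullU_nonempty {A : Finset (Finset ι)} (hA : A.Nonempty) (ω : Finset ι) :
    (hullU A ω).Nonempty :=
  (USet_nonempty hA ω).mono (subset_convexHull ℝ _)

lemma bddBelow_Phi_image (A : Finset (Finset ι)) (ω : Finset ι) :
    BddBelow (Phi '' hullU A ω) := ⟨0, fun x ⟨ν, _, hν⟩ => hν ▸ Phi_nonneg ν⟩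

lemma D2_nonneg (A : Finset (Finset ι)) (ω : Finset ι) : 0 ≤ D2 A ω := by
  unfold D2
  rcases Set.eq_empty_or_nonempty (Phi '' hullU A ω) with h | h
  · rw [h, Real.sInf_empty]
  · exact le_csInf h (fun x ⟨ν, _, hν⟩ => hν ▸ Phi_nonneg ν)

lemma D2_le {A : Finset (Finset ι)} {ω : Finset ι} {ν : ι → ℝ} (hν : ν ∈ hullU A ω) :
    D2 A ω ≤ Phi ν := csInf_le (bddBelow_Phi_image A ω) ⟨ν, hν, rfl⟩

lemma le_D2 {A : Finset (Finset ι)} (hA : A.Nonempty) {ω : Finset ι} {c : ℝ}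
    (h : ∀ ν ∈ hullU A ω, c ≤ Phi ν) : c ≤ D2 A ω :=
  le_csInf ((hullU_nonempty hA ω).image Phi) (fun x ⟨ν, hν, hx⟩ => hx ▸ h ν hν)

/-- helper: pass a pointwise bound through an `sInf`. -/
lemma le_mul_sInf {S : Set ℝ} (hS : S.Nonempty) (hS0 : ∀ x ∈ S, 0 ≤ x)
    {a c d : ℝ} (ha : 0 ≤ a) (h : ∀ x ∈ S, c ≤ a * x + d) : c ≤ a * sInf S + d := by
  rcases eq_or_lt_of_le ha with rfl | ha'
  · obtain ⟨x, hx⟩ := hS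
    simpa using (h x hx).trans (by simp)
  · have hbdd : BddBelow S := ⟨0, hS0⟩
    have : (c - d) / a ≤ sInf S := le_csInf hS fun x hx => by
      rw [div_le_iff₀ ha']; linarith [h x hx]
    calc c = a * ((c - d)/a) + d := by field_simp; ring
    _ ≤ a * sInf S + d := by nlinarith

lemma sq_combo_le {l m a b : ℝ} (hl : 0 ≤ l) (hm : 0 ≤ m) (hlm : l + m = 1) :
    (l * a + m * b) ^ 2 ≤ l * a ^ 2 + m * b ^ 2 := by
  nlinarith [sq_nonneg (a - b), mul_nonneg hl hm]

/-- updating a coordinate maps convex hulls into convex hulls -/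
lemma update_mem_hull {S : Set (ι → ℝ)} {v : ι → ℝ} (i : ι) (c : ℝ)
    (hv : v ∈ convexHull ℝ S) :
    Function.update v i c ∈ convexHull ℝ ((fun w => Function.update w i c) '' S) := by
  have hsub : S ⊆ (fun w => Function.update w i c) ⁻¹'
      (convexHull ℝ ((fun w => Function.update w i c) '' S)) := by
    intro w hw
    exact subset_convexHull ℝ _ ⟨w, hw, rfl⟩
  have hconv : Convex ℝ ((fun w => Function.update w i c) ⁻¹'
      (convexHull ℝ ((fun w => Function.update w i c) '' S))) := by
    intro x hx y hy l m hl hm hlm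
    have key : Function.update (l • x + m • y) i c
        = l • Function.update x i c + m • Function.update y i c := by
      funext j
      by_cases hj : j = i
      · subst hj
        simp only [Function.update_self, Pi.add_apply, Pi.smul_apply, smul_eq_mul,
          Function.update_self]
        linear_combination (-c) * hlm
      · simp [Function.update_of_ne hj]
    simp only [Set.mem_preimage] at *
    rw [key]
    exact (convex_convexHull ℝ _) hx hy hl hm hlm
  exact convexHull_min hsub hconv hv


def fib0 (A : Finset (Finset ι)) (i : ι) : Finset (Finset ι) := A.filter (fun σ => i ∉ σ)
def fib1 (A : Finset (Finset ι)) (i : ι) : Finset (Finset ι) :=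
  (A.filter (fun σ => i ∈ σ)).image (fun σ => σ.erase i)
def fibB (A : Finset (Finset ι)) (i : ι) : Finset (Finset ι) := fib0 A i ∪ fib1 A i

lemma mem_fib0 {A : Finset (Finset ι)} {i : ι} {τ : Finset ι} (h : τ ∈ fib0 A i) :
    τ ∈ A ∧ i ∉ τ := by simpa [fib0] using h

lemma mem_fib1 {A : Finset (Finset ι)} {i : ι} {τ : Finset ι} (h : τ ∈ fib1 A i) :
    i ∉ τ ∧ insert i τ ∈ A := by
  simp only [fib1, Finset.mem_image, Finset.mem_filter] at h
  obtain ⟨σ, ⟨hσA, hiσ⟩, rfl⟩ := h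
  exact ⟨Finset.notMem_erase _ _, by rwa [Finset.insert_erase hiσ]⟩

lemma Phi_update (v : ι → ℝ) (i : ι) (c : ℝ) :
    Phi (Function.update v i c) = c ^ 2 + ∑ j ∈ Finset.univ.erase i, (v j) ^ 2 := by
  unfold Phi
  rw [← Finset.add_sum_erase _ _ (Finset.mem_univ i), Function.update_self]
  congr 1
  exact Finset.sum_congr rfl fun j hj =>
    by rw [Function.update_of_ne (Finset.ne_of_mem_erase hj)]

lemma sum_erase_le_Phi (v : ι → ℝ) (i : ι) :
    ∑ j ∈ Finset.univ.erase i, (v j) ^ 2 ≤ Phi v :=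
  Finset.sum_le_sum_of_subset_of_nonneg (Finset.erase_subset _ _)
    (fun j _ _ => sq_nonneg _)

/-- generic lifting of coordinate-update into the convex hull of `USet`. -/
lemma update_hull_step {A Ax : Finset (Finset ι)} {ω ω' : Finset ι} {i : ι} {c : ℝ}
    (hc1 : c ≤ 1)
    (hω' : ∀ j, j ≠ i → (j ∈ ω' ↔ j ∈ ω))
    (hfib : ∀ τ ∈ Ax, ∃ σ ∈ A, chi ω' σ i ≤ c ∧ ∀ j, j ≠ i → ((j ∈ σ) ↔ (j ∈ τ)))
    {v : ι → ℝ} (hv : v ∈ hullU Ax ω) : Function.update v i c ∈ hullU A ω' := by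
  have h1 : Function.update v i c ∈
      convexHull ℝ ((fun w => Function.update w i c) '' USet Ax ω) :=
    update_mem_hull i c hv
  refine convexHull_mono ?_ h1
  rintro w ⟨u, ⟨τ, hτ, hu⟩, rfl⟩
  obtain ⟨σ, hσA, hchi, hmatch⟩ := hfib τ hτ
  refine ⟨σ, hσA, fun j => ?_⟩
  show chi ω' σ j ≤ Function.update u i c j ∧ Function.update u i c j ≤ 1
  by_cases hj : j = i
  · subst hj
    rw [Function.update_self]
    exact ⟨hchi, hc1⟩
  · rw [Function.update_of_ne hj]
    have : chi ω' σ j = chi ω τ j := by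
      unfold chi
      have h1 := hω' j hj
      have h2 := hmatch j hj
      by_cases h : j ∈ ω <;> by_cases h' : j ∈ τ <;> simp [h1, h2, h, h']
    rw [this]
    exact hu j

lemma hfib_B {A : Finset (Finset ι)} {i : ι} {ω' : Finset ι} :
    ∀ τ ∈ fibB A i, ∃ σ ∈ A, chi ω' σ i ≤ 1 ∧ ∀ j, j ≠ i → ((j ∈ σ) ↔ (j ∈ τ)) := by
  intro τ hτ
  rcases Finset.mem_union.1 hτ with h | h
  · exact ⟨τ, (mem_fib0 h).1, chi_le_one _ _ _, fun j _ => Iff.rfl⟩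
  · obtain ⟨hiτ, hins⟩ := mem_fib1 h
    exact ⟨insert i τ, hins, chi_le_one _ _ _,
      fun j hj => by simp [Finset.mem_insert, hj]⟩

lemma D2_le_one_add {A : Finset (Finset ι)} {i : ι} {ω ω' : Finset ι}
    (hB : (fibB A i).Nonempty)
    (hω' : ∀ j, j ≠ i → (j ∈ ω' ↔ j ∈ ω)) :
    D2 A ω' ≤ 1 + D2 (fibB A i) ω := by
  have key : ∀ x ∈ Phi '' hullU (fibB A i) ω, D2 A ω' - 1 ≤ x := by
    rintro x ⟨v, hv, rfl⟩
    have hmem : Function.update v i 1 ∈ hullU A ω' :=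
      update_hull_step le_rfl hω' hfib_B hv
    have hD := D2_le hmem
    rw [Phi_update, one_pow] at hD
    have h5 := sum_erase_le_Phi v i
    linarith
  have h := le_csInf ((hullU_nonempty hB ω).image Phi) key
  have heq : sInf (Phi '' hullU (fibB A i) ω) = D2 (fibB A i) ω := rfl
  rw [heq] at h
  linarith

lemma D2_le_combo {A : Finset (Finset ι)} {i : ι} {ω ω' : Finset ι}
    {Ax : Finset (Finset ι)} (hB : (fibB A i).Nonempty) (hAx : Ax.Nonempty)
    (hω' : ∀ j, j ≠ i → (j ∈ ω' ↔ j ∈ ω))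
    (hfib : ∀ τ ∈ Ax, ∃ σ ∈ A, chi ω' σ i ≤ 0 ∧ ∀ j, j ≠ i → ((j ∈ σ) ↔ (j ∈ τ)))
    {l : ℝ} (hl : 0 ≤ l) (hl1 : l ≤ 1) :
    D2 A ω' ≤ l ^ 2 + l * D2 (fibB A i) ω + (1 - l) * D2 Ax ω := by
  have key : ∀ v ∈ hullU (fibB A i) ω, ∀ u ∈ hullU Ax ω,
      D2 A ω' ≤ l ^ 2 + l * Phi v + (1 - l) * Phi u := by
    intro v hv u hu
    have h1 : Function.update v i 1 ∈ hullU A ω' :=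
      update_hull_step le_rfl hω' hfib_B hv
    have h2 : Function.update u i 0 ∈ hullU A ω' :=
      update_hull_step zero_le_one hω'
        (fun τ hτ => by
          obtain ⟨σ, hσ, hc, hm⟩ := hfib τ hτ
          exact ⟨σ, hσ, hc, hm⟩) hu
    have hmem : l • Function.update v i 1 + (1 - l) • Function.update u i 0
        ∈ hullU A ω' :=
      (convex_convexHull ℝ _) h1 h2 hl (by linarith) (by ring)
    have hD := D2_le hmem
    have hPhi : Phi (l • Function.update v i 1 + (1 - l) • Function.update u i 0)
        ≤ l ^ 2 + l * Phi v + (1 - l) * Phi u := by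
      unfold Phi
      rw [← Finset.add_sum_erase _ _ (Finset.mem_univ i)]
      have hi : ((l • Function.update v i 1 + (1 - l) • Function.update u i 0) i) ^ 2
          = l ^ 2 := by
        simp [Function.update_self]
      rw [hi]
      have hrest : ∑ j ∈ Finset.univ.erase i,
          ((l • Function.update v i 1 + (1 - l) • Function.update u i 0) j) ^ 2
          ≤ l * ∑ j ∈ Finset.univ.erase i, (v j) ^ 2
            + (1 - l) * ∑ j ∈ Finset.univ.erase i, (u j) ^ 2 := by
        rw [Finset.mul_sum, Finset.mul_sum, ← Finset.sum_add_distrib]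
        refine Finset.sum_le_sum fun j hj => ?_
        have hj' := Finset.ne_of_mem_erase hj
        simp only [Pi.add_apply, Pi.smul_apply, smul_eq_mul,
          Function.update_of_ne hj']
        exact sq_combo_le hl (by linarith) (by ring)
      have h3 := sum_erase_le_Phi v i
      have h4 := sum_erase_le_Phi u i
      unfold Phi at h3 h4
      have h5 := mul_le_mul_of_nonneg_left h3 hl
      have h6 := mul_le_mul_of_nonneg_left h4 (by linarith : (0:ℝ) ≤ 1 - l)
      linarith
    linarith
  -- now pass to infima
  have step1 : ∀ u ∈ hullU Ax ω,
      D2 A ω' ≤ l * D2 (fibB A i) ω + (l ^ 2 + (1 - l) * Phi u) := by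
    intro u hu
    have h7 := le_mul_sInf (S := Phi '' hullU (fibB A i) ω)
      (c := D2 A ω') (d := l ^ 2 + (1 - l) * Phi u)
      ((hullU_nonempty hB ω).image Phi)
      (fun x ⟨ν, _, hν⟩ => hν ▸ Phi_nonneg ν) hl
      (fun x hx => by
        obtain ⟨v, hv, rfl⟩ := hx
        linarith [key v hv u hu])
    have heq : sInf (Phi '' hullU (fibB A i) ω) = D2 (fibB A i) ω := rfl
    rw [heq] at h7
    linarith
  have step2 := le_mul_sInf (S := Phi '' hullU Ax ω)
    (c := D2 A ω') (d := l * D2 (fibB A i) ω + l ^ 2)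
    ((hullU_nonempty hAx ω).image Phi)
    (fun x ⟨ν, _, hν⟩ => hν ▸ Phi_nonneg ν) (by linarith : (0:ℝ) ≤ 1 - l)
    (fun x hx => by
      obtain ⟨u, hu, rfl⟩ := hx
      linarith [step1 u hu])
  have heq : sInf (Phi '' hullU Ax ω) = D2 Ax ω := rfl
  rw [heq] at step2
  linarith

lemma W_nonneg {p : ℝ} (hp0 : 0 ≤ p) (hp1 : p ≤ 1) (s ω : Finset ι) : 0 ≤ W p s ω :=
  Finset.prod_nonneg fun j _ => by split <;> linarith

lemma W_congr {p : ℝ} {s ω ω' : Finset ι} (h : ∀ j ∈ s, (j ∈ ω ↔ j ∈ ω')) :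
    W p s ω = W p s ω' :=
  Finset.prod_congr rfl fun j hj => by simp only [propext (h j hj)]

lemma W_insert_not_mem {p : ℝ} {s ω : Finset ι} {i : ι} (his : i ∉ s) (hiω : i ∉ ω) :
    W p (insert i s) ω = (1 - p) * W p s ω := by
  unfold W; rw [Finset.prod_insert his, if_neg hiω]

lemma W_insert_mem {p : ℝ} {s ω : Finset ι} {i : ι} (his : i ∉ s) (hiω : i ∈ ω) :
    W p (insert i s) ω = p * W p s ω := by
  unfold W; rw [Finset.prod_insert his, if_pos hiω]

lemma W_insert_point {p : ℝ} {s ω : Finset ι} {i : ι} (his : i ∉ s) :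
    W p s (insert i ω) = W p s ω :=
  W_congr fun j hj => by
    have : j ≠ i := fun h => his (h ▸ hj)
    simp [Finset.mem_insert, this]

lemma W_erase_point {p : ℝ} {s σ : Finset ι} {i : ι} (his : i ∉ s) :
    W p s (σ.erase i) = W p s σ :=
  W_congr fun j hj => by
    have : j ≠ i := fun h => his (h ▸ hj)
    simp [Finset.mem_erase, this]

lemma W_mass {p : ℝ} (s : Finset ι) : ∑ ω ∈ s.powerset, W p s ω = 1 := by
  induction s using Finset.induction with
  | empty => simp [W]
  | insert i s his ih =>
    rw [Finset.sum_powerset_insert his]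
    have h1 : ∀ ω ∈ s.powerset, W p (insert i s) ω = (1 - p) * W p s ω := fun ω hω =>
      W_insert_not_mem his fun h => his (Finset.mem_powerset.1 hω h)
    have h2 : ∀ ω ∈ s.powerset, W p (insert i s) (insert i ω) = p * W p s ω := fun ω hω => by
      rw [W_insert_mem his (Finset.mem_insert_self i ω), W_insert_point his]
    rw [Finset.sum_congr rfl h1, Finset.sum_congr rfl h2, ← Finset.mul_sum, ← Finset.mul_sum, ih]
    ring

lemma sumA_decomp {p : ℝ} {s : Finset ι} {i : ι} (his : i ∉ s)
    (A : Finset (Finset ι)) :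
    ∑ σ ∈ A, W p (insert i s) σ
      = (1 - p) * ∑ σ ∈ fib0 A i, W p s σ + p * ∑ τ ∈ fib1 A i, W p s τ := by
  rw [← Finset.sum_filter_add_sum_filter_not A (fun σ => i ∉ σ)]
  congr 1
  · rw [Finset.mul_sum]
    refine Finset.sum_congr rfl fun σ hσ => ?_
    exact W_insert_not_mem his (Finset.mem_filter.1 hσ).2
  · unfold fib1
    rw [Finset.sum_image (fun σ₁ h₁ σ₂ h₂ h => by
      have e₁ := Finset.insert_erase (Finset.mem_filter.1 h₁).2
      have e₂ := Finset.insert_erase (Finset.mem_filter.1 h₂).2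
      rw [← e₁, ← e₂, h]), Finset.mul_sum]
    refine Finset.sum_congr (by congr 1; ext σ; simp [not_not]) fun σ hσ => ?_
    have hiσ : i ∈ σ := by simpa using (Finset.mem_filter.1 hσ).2
    rw [W_insert_mem his hiσ, W_erase_point his]

/-- Hölder's inequality for finite weighted sums. -/
lemma holder {γ : Type*} (t : Finset γ) (w g h : γ → ℝ)
    (hw : ∀ k ∈ t, 0 ≤ w k) (hg : ∀ k ∈ t, 0 ≤ g k) (hh : ∀ k ∈ t, 0 ≤ h k)
    {l : ℝ} (hl : 0 ≤ l) (hl1 : l ≤ 1)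
    (hSg : 0 < ∑ k ∈ t, w k * g k) (hSh : 0 < ∑ k ∈ t, w k * h k) :
    ∑ k ∈ t, w k * (g k ^ l * h k ^ (1 - l))
      ≤ (∑ k ∈ t, w k * g k) ^ l * (∑ k ∈ t, w k * h k) ^ (1 - l) := by
  obtain ⟨Sg, hSgdef⟩ : ∃ Sg : ℝ, ∑ k ∈ t, w k * g k = Sg := ⟨_, rfl⟩
  obtain ⟨Sh, hShdef⟩ : ∃ Sh : ℝ, ∑ k ∈ t, w k * h k = Sh := ⟨_, rfl⟩
  rw [hSgdef] at hSg ⊢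
  rw [hShdef] at hSh ⊢
  have hpos : 0 < Sg ^ l * Sh ^ (1 - l) :=
    mul_pos (Real.rpow_pos_of_pos hSg _) (Real.rpow_pos_of_pos hSh _)
  have key : ∀ k ∈ t, w k * (g k ^ l * h k ^ (1 - l))
      ≤ (Sg ^ l * Sh ^ (1 - l)) * (w k * (l * (g k / Sg) + (1 - l) * (h k / Sh))) := by
    intro k hk
    have hgm := Real.geom_mean_le_arith_mean2_weighted (w₁ := l) (w₂ := 1 - l)
      (p₁ := g k / Sg) (p₂ := h k / Sh) hl (by linarith)
      (div_nonneg (hg k hk) hSg.le) (div_nonneg (hh k hk) hSh.le) (by ring)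
    have hrw : (g k / Sg) ^ l * (h k / Sh) ^ (1 - l)
        = (g k ^ l * h k ^ (1 - l)) / (Sg ^ l * Sh ^ (1 - l)) := by
      rw [Real.div_rpow (hg k hk) hSg.le, Real.div_rpow (hh k hk) hSh.le]
      ring
    rw [hrw] at hgm
    have h2 := mul_le_mul_of_nonneg_left hgm (mul_nonneg (hw k hk) hpos.le)
    have h3 : (w k * (Sg ^ l * Sh ^ (1 - l)))
        * ((g k ^ l * h k ^ (1 - l)) / (Sg ^ l * Sh ^ (1 - l)))
        = w k * (g k ^ l * h k ^ (1 - l)) := by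
      field_simp
    rw [h3] at h2
    calc w k * (g k ^ l * h k ^ (1 - l))
        ≤ w k * (Sg ^ l * Sh ^ (1 - l)) * (l * (g k / Sg) + (1 - l) * (h k / Sh)) := h2
      _ = (Sg ^ l * Sh ^ (1 - l)) * (w k * (l * (g k / Sg) + (1 - l) * (h k / Sh))) := by ring
  calc ∑ k ∈ t, w k * (g k ^ l * h k ^ (1 - l))
      ≤ ∑ k ∈ t, (Sg ^ l * Sh ^ (1 - l)) * (w k * (l * (g k / Sg) + (1 - l) * (h k / Sh))) :=
        Finset.sum_le_sum key
    _ = (Sg ^ l * Sh ^ (1 - l)) * ((l / Sg) * ∑ k ∈ t, (w k * g k)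
          + ((1 - l) / Sh) * ∑ k ∈ t, (w k * h k)) := by
        rw [← Finset.mul_sum]
        congr 1
        rw [Finset.mul_sum, Finset.mul_sum, ← Finset.sum_add_distrib]
        exact Finset.sum_congr rfl fun k _ => by ring
    _ = (Sg ^ l * Sh ^ (1 - l)) * ((l / Sg) * Sg + ((1 - l) / Sh) * Sh) := by
        rw [hSgdef, hShdef]
    _ = Sg ^ l * Sh ^ (1 - l) := by
        field_simp; ring

/-- exp bound helpers -/
lemma exp_cubic_upper {x : ℝ} (h0 : 0 ≤ x) (h1 : x ≤ 1) :
    Real.exp x ≤ 1 + x + x ^ 2 / 2 + (2 / 9) * x ^ 3 := by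
  have hb := Real.exp_bound (x := x) (by rwa [abs_of_nonneg h0]) (n := 3) (by norm_num)
  have hs : ∑ i ∈ Finset.range 3, x ^ i / (Nat.factorial i) = 1 + x + x ^ 2 / 2 := by
    norm_num [Finset.sum_range_succ, Nat.factorial]
  rw [hs, abs_of_nonneg h0] at hb
  norm_num [Nat.factorial] at hb
  have := abs_le.1 hb
  nlinarith [this.2]

lemma exp_cubic_upper_neg {x : ℝ} (h0 : 0 ≤ x) (h1 : x ≤ 1) :
    Real.exp (-x) ≤ 1 - x + x ^ 2 / 2 + (2 / 9) * x ^ 3 := by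
  have hb := Real.exp_bound (x := -x) (by rwa [abs_neg, abs_of_nonneg h0]) (n := 3) (by norm_num)
  have hs : ∑ i ∈ Finset.range 3, (-x) ^ i / (Nat.factorial i) = 1 - x + x ^ 2 / 2 := by
    norm_num [Finset.sum_range_succ, Nat.factorial]
    ring
  rw [hs, abs_neg, abs_of_nonneg h0] at hb
  norm_num [Nat.factorial] at hb
  have := abs_le.1 hb
  nlinarith [this.2]

lemma exp_quarter_le : Real.exp (1 / 4) ≤ 2 - Real.exp (-(1 / 2)) := by
  have h1 := exp_cubic_upper (x := 1/4) (by norm_num) (by norm_num)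
  have h2 := exp_cubic_upper_neg (x := 1/2) (by norm_num) (by norm_num)
  norm_num at h1 h2 ⊢
  linarith

lemma exp_ineq_main {t : ℝ} (h0 : 0 ≤ t) (h1 : t ≤ 1 / 2) :
    Real.exp (t - t ^ 2) ≤ 2 - Real.exp (-t) := by
  have hu0 : 0 ≤ t - t ^ 2 := by nlinarith
  have hu1 : t - t ^ 2 ≤ 1 := by nlinarith
  have h2 := exp_cubic_upper hu0 hu1
  have h3 := exp_cubic_upper_neg h0 (by linarith)
  nlinarith [pow_nonneg h0 3, pow_nonneg h0 4, sq_nonneg t, sq_nonneg (1 - t),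
    mul_nonneg (mul_nonneg h0 h0) h0, sq_nonneg (t*(1-t))]
lemma exp_ge_one_of_nonneg {x : ℝ} (h : 0 ≤ x) : 1 ≤ Real.exp x := by
  calc (1:ℝ) = Real.exp 0 := Real.exp_zero.symm
  _ ≤ Real.exp x := Real.exp_le_exp.2 h

lemma fiber_bound (p : ℝ) (hp0 : 0 ≤ p) (hp1 : p ≤ 1) (s : Finset ι) (i : ι)
    (A Ax : Finset (Finset ι)) (g : Finset ι → Finset ι)
    (hB : (fibB A i).Nonempty) (hsubB : fibB A i ⊆ s.powerset) (hAxB : Ax ⊆ fibB A i)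
    (hgω : ∀ ω ∈ s.powerset, ∀ j, j ≠ i → (j ∈ g ω ↔ j ∈ ω))
    (hgfib : ∀ ω ∈ s.powerset, ∀ τ ∈ Ax, ∃ σ ∈ A,
      chi (g ω) σ i ≤ 0 ∧ ∀ j, j ≠ i → ((j ∈ σ) ↔ (j ∈ τ)))
    (ih : ∀ A' : Finset (Finset ι), A'.Nonempty → A' ⊆ s.powerset →
      (∑ ω ∈ s.powerset, W p s ω * Real.exp (D2 A' ω / 4)) * (∑ σ ∈ A', W p s σ) ≤ 1)
    (hPBpos : 0 < ∑ σ ∈ fibB A i, W p s σ) :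
    (∑ ω ∈ s.powerset, W p s ω * Real.exp (D2 A (g ω) / 4))
        * (∑ σ ∈ fibB A i, W p s σ)
      ≤ 2 - (∑ σ ∈ Ax, W p s σ) / (∑ σ ∈ fibB A i, W p s σ) := by
  have hWn : ∀ ω, 0 ≤ W p s ω := W_nonneg hp0 hp1 s
  have hmass := W_mass (p := p) s
  set PB := ∑ σ ∈ fibB A i, W p s σ with hPBdef
  set Px := ∑ σ ∈ Ax, W p s σ with hPxdef
  set SB := ∑ ω ∈ s.powerset, W p s ω * Real.exp (D2 (fibB A i) ω / 4) with hSBdef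
  set Sx := ∑ ω ∈ s.powerset, W p s ω * Real.exp (D2 Ax ω / 4) with hSxdef
  set T := ∑ ω ∈ s.powerset, W p s ω * Real.exp (D2 A (g ω) / 4) with hTdef
  have hPxnn : 0 ≤ Px := Finset.sum_nonneg fun σ _ => hWn σ
  have hPxPB : Px ≤ PB := Finset.sum_le_sum_of_subset_of_nonneg hAxB fun σ _ _ => hWn σ
  have hSB1 : (1:ℝ) ≤ SB := by
    rw [hSBdef]
    calc (1:ℝ) = ∑ ω ∈ s.powerset, W p s ω := hmass.symm
    _ ≤ _ := Finset.sum_le_sum fun ω _ => by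
        have h1 : 1 ≤ Real.exp (D2 (fibB A i) ω / 4) :=
          exp_ge_one_of_nonneg (by linarith [D2_nonneg (fibB A i) ω])
        nlinarith [hWn ω]
  have hIHB := ih (fibB A i) hB hsubB
  have hTnn : 0 ≤ T := Finset.sum_nonneg fun ω _ =>
    mul_nonneg (hWn ω) (Real.exp_pos _).le
  rcases le_or_gt (Px / PB) (Real.exp (-(1/2:ℝ))) with hr | hr
  · -- small fiber: use l = 1
    have hpoint : ∀ ω ∈ s.powerset, D2 A (g ω) ≤ 1 + D2 (fibB A i) ω := fun ω hω =>
      D2_le_one_add hB (hgω ω hω)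
    have hTb : T ≤ Real.exp (1/4) * SB := by
      rw [hTdef, hSBdef, Finset.mul_sum]
      refine Finset.sum_le_sum fun ω hω => ?_
      have h2 : Real.exp (D2 A (g ω) / 4)
          ≤ Real.exp (1/4) * Real.exp (D2 (fibB A i) ω / 4) := by
        rw [← Real.exp_add]
        exact Real.exp_le_exp.2 (by linarith [hpoint ω hω])
      calc W p s ω * Real.exp (D2 A (g ω) / 4)
          ≤ W p s ω * (Real.exp (1/4) * Real.exp (D2 (fibB A i) ω / 4)) :=
            mul_le_mul_of_nonneg_left h2 (hWn ω)
        _ = Real.exp (1/4) * (W p s ω * Real.exp (D2 (fibB A i) ω / 4)) := by ring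
    have hrPx : 0 ≤ Px / PB := div_nonneg hPxnn hPBpos.le
    calc T * PB ≤ (Real.exp (1/4) * SB) * PB :=
          mul_le_mul_of_nonneg_right hTb hPBpos.le
      _ = Real.exp (1/4) * (SB * PB) := by ring
      _ ≤ Real.exp (1/4) * 1 := mul_le_mul_of_nonneg_left hIHB (Real.exp_pos _).le
      _ = Real.exp (1/4) := mul_one _
      _ ≤ 2 - Real.exp (-(1/2:ℝ)) := exp_quarter_le
      _ ≤ 2 - Px / PB := by linarith
  · -- large fiber
    have hrpos : 0 < Px / PB := (Real.exp_pos _).trans hr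
    have hPxpos : 0 < Px := by
      rcases lt_or_eq_of_le hPxnn with h | h
      · exact h
      · exfalso; rw [← h] at hrpos; simp at hrpos
    have hAxne : Ax.Nonempty := by
      rw [Finset.nonempty_iff_ne_empty]
      rintro rfl
      simp [hPxdef] at hPxpos
    have hIHx : Sx * Px ≤ 1 := ih Ax hAxne (hAxB.trans hsubB)
    have hSx1 : (1:ℝ) ≤ Sx := by
      rw [hSxdef]
      calc (1:ℝ) = ∑ ω ∈ s.powerset, W p s ω := hmass.symm
      _ ≤ _ := Finset.sum_le_sum fun ω _ => by
          have h1 : 1 ≤ Real.exp (D2 Ax ω / 4) :=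
            exp_ge_one_of_nonneg (by linarith [D2_nonneg Ax ω])
          nlinarith [hWn ω]
    set r := Px / PB with hrdef
    have hr1 : r ≤ 1 := by rw [hrdef, div_le_one hPBpos]; exact hPxPB
    set t := -Real.log r with htdef
    have hlogr : Real.log r = -t := by rw [htdef]; ring
    have ht0 : 0 ≤ t := by
      rw [htdef]
      simp only [neg_nonneg]
      exact Real.log_nonpos hrpos.le hr1
    have ht12 : t ≤ 1/2 := by
      have := (Real.lt_log_iff_exp_lt hrpos).2 hr
      rw [htdef]; linarith
    set l := 2 * t with hldef
    have hl0 : 0 ≤ l := by rw [hldef]; linarith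
    have hl1 : l ≤ 1 := by rw [hldef]; linarith
    -- pointwise exponential bound
    have hpt : ∀ ω ∈ s.powerset, Real.exp (D2 A (g ω) / 4)
        ≤ Real.exp (l^2/4) * (Real.exp (D2 (fibB A i) ω / 4) ^ l
            * Real.exp (D2 Ax ω / 4) ^ (1 - l)) := by
      intro ω hω
      have hd := D2_le_combo hB hAxne (hgω ω hω) (hgfib ω hω) hl0 hl1
      have ea : Real.exp (D2 (fibB A i) ω / 4) ^ l
          = Real.exp (D2 (fibB A i) ω / 4 * l) := (Real.exp_mul _ _).symm
      have eb : Real.exp (D2 Ax ω / 4) ^ (1 - l)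
          = Real.exp (D2 Ax ω / 4 * (1 - l)) := (Real.exp_mul _ _).symm
      rw [ea, eb, ← Real.exp_add, ← Real.exp_add]
      refine Real.exp_le_exp.2 ?_
      nlinarith [hd]
    -- Hölder
    have hSBpos : (0:ℝ) < SB := by linarith
    have hSxpos : (0:ℝ) < Sx := by linarith
    have hhold := holder (s.powerset) (fun ω => W p s ω)
      (fun ω => Real.exp (D2 (fibB A i) ω / 4)) (fun ω => Real.exp (D2 Ax ω / 4))
      (fun ω _ => hWn ω) (fun ω _ => (Real.exp_pos _).le) (fun ω _ => (Real.exp_pos _).le)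
      hl0 hl1 (by rw [← hSBdef]; exact hSBpos) (by rw [← hSxdef]; exact hSxpos)
    rw [← hSBdef, ← hSxdef] at hhold
    have hT2 : T ≤ Real.exp (l^2/4) * (SB ^ l * Sx ^ (1 - l)) := by
      calc T ≤ ∑ ω ∈ s.powerset, W p s ω * (Real.exp (l^2/4)
            * (Real.exp (D2 (fibB A i) ω / 4) ^ l * Real.exp (D2 Ax ω / 4) ^ (1 - l))) :=
          Finset.sum_le_sum fun ω hω => mul_le_mul_of_nonneg_left (hpt ω hω) (hWn ω)
        _ = Real.exp (l^2/4) * ∑ ω ∈ s.powerset, W p s ω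
            * (Real.exp (D2 (fibB A i) ω / 4) ^ l * Real.exp (D2 Ax ω / 4) ^ (1 - l)) := by
          rw [Finset.mul_sum]
          exact Finset.sum_congr rfl fun ω _ => by ring
        _ ≤ Real.exp (l^2/4) * (SB ^ l * Sx ^ (1 - l)) :=
          mul_le_mul_of_nonneg_left hhold (Real.exp_pos _).le
    -- rpow algebra
    have hSBnn : 0 ≤ SB := hSBpos.le
    have hSxnn : 0 ≤ Sx := hSxpos.le
    have hPB1 : PB ^ l * PB ^ (1 - l) = PB := by
      rw [← Real.rpow_add hPBpos]
      norm_num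
    have e1 : SB ^ l * Sx ^ (1 - l) * PB = (SB * PB) ^ l * (Sx * PB) ^ (1 - l) := by
      conv_lhs => rw [show PB = PB ^ l * PB ^ (1 - l) from hPB1.symm]
      rw [Real.mul_rpow hSBnn hPBpos.le, Real.mul_rpow hSxnn hPBpos.le]
      ring
    have e2 : (SB * PB) ^ l ≤ 1 :=
      Real.rpow_le_one (mul_nonneg hSBnn hPBpos.le) hIHB hl0
    have hPxr : Px = r * PB := by
      rw [hrdef]
      field_simp
    have e3 : (Sx * PB) ^ (1 - l) ≤ (1/r) ^ (1 - l) := by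
      refine Real.rpow_le_rpow (mul_nonneg hSxnn hPBpos.le) ?_ (by linarith)
      have hq : Sx * PB = (Sx * Px) / r := by
        rw [hPxr]
        field_simp
      rw [hq]
      exact (div_le_div_iff_of_pos_right hrpos).2 hIHx
    have e4 : Real.exp (l^2/4) * (1/r) ^ (1 - l) = Real.exp (t - t^2) := by
      rw [one_div, Real.rpow_def_of_pos (inv_pos.2 hrpos), Real.log_inv, hlogr,
        ← Real.exp_add]
      congr 1
      rw [hldef]
      ring
    have e5 : Real.exp (-t) = r := by
      rw [← hlogr, Real.exp_log hrpos]
    calc T * PB ≤ (Real.exp (l^2/4) * (SB ^ l * Sx ^ (1 - l))) * PB :=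
          mul_le_mul_of_nonneg_right hT2 hPBpos.le
      _ = Real.exp (l^2/4) * ((SB * PB) ^ l * (Sx * PB) ^ (1 - l)) := by
          rw [mul_assoc, e1]
      _ ≤ Real.exp (l^2/4) * (1 * (1/r) ^ (1 - l)) := by
          refine mul_le_mul_of_nonneg_left ?_ (Real.exp_pos _).le
          refine mul_le_mul e2 e3 (Real.rpow_nonneg (mul_nonneg hSxnn hPBpos.le) _) zero_le_one
      _ = Real.exp (t - t^2) := by rw [one_mul, e4]
      _ ≤ 2 - Real.exp (-t) := exp_ineq_main ht0 ht12
      _ = 2 - r := by rw [e5]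
theorem tal_ind (p : ℝ) (hp0 : 0 ≤ p) (hp1 : p ≤ 1) (s : Finset ι) :
    ∀ A : Finset (Finset ι), A.Nonempty → A ⊆ s.powerset →
    (∑ ω ∈ s.powerset, W p s ω * Real.exp (D2 A ω / 4)) * (∑ σ ∈ A, W p s σ) ≤ 1 := by
  induction s using Finset.induction with
  | empty =>
    intro A hA hsub
    have hAeq : A = {∅} := by
      rcases Finset.subset_singleton_iff.1 (by simpa using hsub) with h | h
      · exact absurd h (Finset.nonempty_iff_ne_empty.1 hA)
      · exact h
    subst hAeq
    have hD : D2 ({∅} : Finset (Finset ι)) (∅ : Finset ι) = 0 := by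
      refine le_antisymm ?_ (D2_nonneg _ _)
      have hm : chi (∅ : Finset ι) (∅ : Finset ι) ∈ hullU ({∅} : Finset (Finset ι)) ∅ :=
        subset_convexHull ℝ _ (chi_mem_USet (Finset.mem_singleton_self _))
      have h2 := D2_le hm
      have hPhi : Phi (chi (∅ : Finset ι) (∅ : Finset ι)) = 0 := by
        unfold Phi chi
        simp
      rw [hPhi] at h2
      exact h2
    simp [Finset.powerset_empty, W, hD]
  | insert i s his ih =>
    intro A hA hsub
    have hB : (fibB A i).Nonempty := by
      obtain ⟨σ, hσ⟩ := hA
      by_cases hi : i ∈ σ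
      · exact ⟨σ.erase i, Finset.mem_union.2 (Or.inr (Finset.mem_image.2
          ⟨σ, Finset.mem_filter.2 ⟨hσ, hi⟩, rfl⟩))⟩
      · exact ⟨σ, Finset.mem_union.2 (Or.inl (Finset.mem_filter.2 ⟨hσ, hi⟩))⟩
    have hsub0 : fib0 A i ⊆ s.powerset := by
      intro σ hσ
      obtain ⟨hσA, hiσ⟩ := mem_fib0 hσ
      have hss := Finset.mem_powerset.1 (hsub hσA)
      exact Finset.mem_powerset.2 fun j hj => by
        rcases Finset.mem_insert.1 (hss hj) with rfl | h
        · exact absurd hj hiσ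
        · exact h
    have hsub1 : fib1 A i ⊆ s.powerset := by
      intro τ hτ
      obtain ⟨hiτ, hins⟩ := mem_fib1 hτ
      have hss := Finset.mem_powerset.1 (hsub hins)
      exact Finset.mem_powerset.2 fun j hj => by
        have hj2 : j ∈ insert i τ := Finset.mem_insert.2 (Or.inr hj)
        rcases Finset.mem_insert.1 (hss hj2) with rfl | h
        · exact absurd hj hiτ
        · exact h
    have hsubB : fibB A i ⊆ s.powerset := Finset.union_subset hsub0 hsub1
    have hWn : ∀ ω, 0 ≤ W p s ω := W_nonneg hp0 hp1 s
    -- rewrite both factors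
    rw [Finset.sum_powerset_insert his, sumA_decomp his A]
    have hT0 : ∑ ω ∈ s.powerset, W p (insert i s) ω * Real.exp (D2 A ω / 4)
        = (1 - p) * ∑ ω ∈ s.powerset, W p s ω * Real.exp (D2 A ω / 4) := by
      rw [Finset.mul_sum]
      refine Finset.sum_congr rfl fun ω hω => ?_
      rw [W_insert_not_mem his fun h => his (Finset.mem_powerset.1 hω h)]
      ring
    have hT1 : ∑ ω ∈ s.powerset, W p (insert i s) (insert i ω)
          * Real.exp (D2 A (insert i ω) / 4)
        = p * ∑ ω ∈ s.powerset, W p s ω * Real.exp (D2 A (insert i ω) / 4) := by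
      rw [Finset.mul_sum]
      refine Finset.sum_congr rfl fun ω hω => ?_
      rw [W_insert_mem his (Finset.mem_insert_self i ω), W_insert_point his]
      ring
    rw [hT0, hT1]
    set T0 := ∑ ω ∈ s.powerset, W p s ω * Real.exp (D2 A ω / 4) with hT0def
    set T1 := ∑ ω ∈ s.powerset, W p s ω * Real.exp (D2 A (insert i ω) / 4) with hT1def
    set P0 := ∑ σ ∈ fib0 A i, W p s σ with hP0def
    set P1 := ∑ σ ∈ fib1 A i, W p s σ with hP1def
    have hPB0 : P0 ≤ ∑ σ ∈ fibB A i, W p s σ :=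
      Finset.sum_le_sum_of_subset_of_nonneg Finset.subset_union_left fun σ _ _ => hWn σ
    have hPB1 : P1 ≤ ∑ σ ∈ fibB A i, W p s σ :=
      Finset.sum_le_sum_of_subset_of_nonneg Finset.subset_union_right fun σ _ _ => hWn σ
    have hP0nn : 0 ≤ P0 := Finset.sum_nonneg fun σ _ => hWn σ
    have hP1nn : 0 ≤ P1 := Finset.sum_nonneg fun σ _ => hWn σ
    have hT0nn : 0 ≤ T0 := Finset.sum_nonneg fun ω _ =>
      mul_nonneg (hWn ω) (Real.exp_pos _).le
    have hT1nn : 0 ≤ T1 := Finset.sum_nonneg fun ω _ =>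
      mul_nonneg (hWn ω) (Real.exp_pos _).le
    rcases eq_or_lt_of_le (Finset.sum_nonneg fun σ (_ : σ ∈ fibB A i) => hWn σ)
      with hPBz | hPBpos
    · -- PB = 0
      have h0 : P0 = 0 := le_antisymm (by rw [← hPBz] at hPB0; exact hPB0) hP0nn
      have h1 : P1 = 0 := le_antisymm (by rw [← hPBz] at hPB1; exact hPB1) hP1nn
      rw [h0, h1]
      norm_num
    · -- PB > 0
      set PB := ∑ σ ∈ fibB A i, W p s σ with hPBdef
      have hF0 : T0 * PB ≤ 2 - P0 / PB := by
        have hfb := fiber_bound p hp0 hp1 s i A (fib0 A i) (fun ω => ω)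
          hB hsubB Finset.subset_union_left
          (fun ω hω j hj => Iff.rfl)
          (fun ω hω τ hτ => by
            obtain ⟨hτA, hiτ⟩ := mem_fib0 hτ
            refine ⟨τ, hτA, ?_, fun j _ => Iff.rfl⟩
            have hiω : i ∉ ω := fun h => his (Finset.mem_powerset.1 hω h)
            unfold chi
            simp [hiω, hiτ])
          ih hPBpos
        simpa using hfb
      have hF1 : T1 * PB ≤ 2 - P1 / PB := by
        have hfb := fiber_bound p hp0 hp1 s i A (fib1 A i) (fun ω => insert i ω)
          hB hsubB Finset.subset_union_right
          (fun ω hω j hj => by simp [Finset.mem_insert, hj])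
          (fun ω hω τ hτ => by
            obtain ⟨hiτ, hins⟩ := mem_fib1 hτ
            refine ⟨insert i τ, hins, ?_, fun j hj => by simp [Finset.mem_insert, hj]⟩
            unfold chi
            simp)
          ih hPBpos
        simpa using hfb
      have a0 := mul_le_mul_of_nonneg_left hF0 (by linarith : (0:ℝ) ≤ 1 - p)
      have a1 := mul_le_mul_of_nonneg_left hF1 hp0
      have hXPB : ((1 - p) * T0 + p * T1) * PB
          ≤ 2 - ((1 - p) * (P0 / PB) + p * (P1 / PB)) := by
        nlinarith [a0, a1]
      have hsecond : (1 - p) * P0 + p * P1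
          = ((1 - p) * (P0 / PB) + p * (P1 / PB)) * PB := by
        field_simp
      have hm0 : 0 ≤ (1 - p) * (P0 / PB) + p * (P1 / PB) := by
        have := div_nonneg hP0nn hPBpos.le
        have := div_nonneg hP1nn hPBpos.le
        nlinarith
      calc ((1 - p) * T0 + p * T1) * ((1 - p) * P0 + p * P1)
          = (((1 - p) * T0 + p * T1) * PB) * ((1 - p) * (P0 / PB) + p * (P1 / PB)) := by
            rw [hsecond]; ring
        _ ≤ (2 - ((1 - p) * (P0 / PB) + p * (P1 / PB)))
              * ((1 - p) * (P0 / PB) + p * (P1 / PB)) :=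
            mul_le_mul_of_nonneg_right hXPB hm0
        _ ≤ 1 := by nlinarith [sq_nonneg (((1 - p) * (P0 / PB) + p * (P1 / PB)) - 1)]

end TalagrandAux

section Application
open TalagrandAux

lemma BNonCrossing_subset {n : ℕ} {M M' : BG n} (h : M' ⊆ M) (hM : BNonCrossing M) :
    BNonCrossing M' := fun e he f hf hef => hM e (h he) f (h hf) hef

lemma BNonCrossing_empty {n : ℕ} : BNonCrossing (∅ : BG n) :=
  fun e he => absurd he (Finset.notMem_empty e)

lemma BL_exists {n : ℕ} (G : BG n) :
    ∃ M, M ⊆ G ∧ BNonCrossing M ∧ M.card = BL G := by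
  have hne : (G.powerset.filter BNonCrossing).Nonempty :=
    ⟨∅, Finset.mem_filter.2 ⟨Finset.mem_powerset.2 (Finset.empty_subset G),
      BNonCrossing_empty⟩⟩
  obtain ⟨M, hM, hsup⟩ := Finset.exists_mem_eq_sup _ hne Finset.card
  exact ⟨M, Finset.mem_powerset.1 (Finset.mem_filter.1 hM).1,
    (Finset.mem_filter.1 hM).2, hsup.symm⟩

lemma le_BL {n : ℕ} {G M : BG n} (hsub : M ⊆ G) (hnc : BNonCrossing M) :
    M.card ≤ BL G :=
  Finset.le_sup (Finset.mem_filter.2 ⟨Finset.mem_powerset.2 hsub, hnc⟩)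

lemma symEdge_cases {n : ℕ} {F : SymOmega n} {e : Fin n × Fin n} (he : e ∈ symGraph F) :
    ∃ q : SymPairs n, q ∈ F ∧ (q.1 = e ∨ q.1 = (e.2, e.1)) := by
  unfold symGraph at he
  rcases Finset.mem_union.1 he with h | h
  · obtain ⟨q, hq, rfl⟩ := Finset.mem_image.1 h
    exact ⟨q, hq, Or.inl rfl⟩
  · obtain ⟨q, hq, heq⟩ := Finset.mem_image.1 h
    refine ⟨q, hq, Or.inr ?_⟩
    rw [← heq]

lemma mem_symGraph_fst {n : ℕ} {F : SymOmega n} {q : SymPairs n} (hq : q ∈ F) :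
    q.1 ∈ symGraph F :=
  Finset.mem_union.2 (Or.inl (Finset.mem_image.2 ⟨q, hq, rfl⟩))

lemma mem_symGraph_swap {n : ℕ} {F : SymOmega n} {q : SymPairs n} (hq : q ∈ F) :
    (q.1.2, q.1.1) ∈ symGraph F :=
  Finset.mem_union.2 (Or.inr (Finset.mem_image.2 ⟨q, hq, rfl⟩))

lemma no_mirror {n : ℕ} {M : BG n} (hM : BNonCrossing M) {e : Fin n × Fin n}
    (he : e ∈ M) (he' : (e.2, e.1) ∈ M) (hne : e.1 ≠ e.2) : False := by
  have hd : e ≠ (e.2, e.1) := by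
    intro h
    exact hne (congrArg Prod.fst h)
  rcases hM e he (e.2, e.1) he' hd with ⟨h1, h2⟩ | ⟨h1, h2⟩ <;>
    exact absurd h2 (not_lt.2 (le_of_lt h1))

lemma certificate {n : ℕ} (ω : SymOmega n) :
    ∃ I : Finset (SymPairs n), I ⊆ ω ∧ I.card ≤ BL (symGraph ω) ∧
      ∀ σ : SymOmega n, BL (symGraph ω) ≤ BL (symGraph σ) + (I \ σ).card := by
  obtain ⟨M, hMsub, hMnc, hMcard⟩ := BL_exists (symGraph ω)
  rcases M.eq_empty_or_nonempty with rfl | ⟨e₀, he₀⟩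
  · refine ⟨∅, Finset.empty_subset _, by simp, fun σ => ?_⟩
    rw [← hMcard]
    simp
  · obtain ⟨q₀, _, _⟩ := symEdge_cases (hMsub he₀)
    refine ⟨ω.filter (fun q => q.1 ∈ M ∨ (q.1.2, q.1.1) ∈ M), Finset.filter_subset _ _,
      ?_, ?_⟩
    · -- card I ≤ card M = BL
      rw [← hMcard]
      refine Finset.card_le_card_of_injOn
        (fun q => if q.1 ∈ M then q.1 else (q.1.2, q.1.1)) ?_ ?_
      · intro q hq
        rcases (Finset.mem_filter.1 hq).2 with h | h
        · simpa [h] using h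
        · by_cases h1 : q.1 ∈ M
          · simpa [h1] using h1
          · simpa [h1] using h
      · intro q hq q' hq' heq
        simp only at heq
        by_cases h1 : q.1 ∈ M <;> by_cases h2 : q'.1 ∈ M <;>
          simp only [h1, h2, if_pos, if_neg, if_true, if_false] at heq
        · exact Subtype.ext heq
        · exfalso
          have hlt := q.2
          have hlt' := q'.2
          have : q.1.1 = q'.1.2 := congrArg Prod.fst heq
          have h2' : q.1.2 = q'.1.1 := congrArg Prod.snd heq
          rw [this, h2'] at hlt
          exact absurd hlt (not_lt.2 (le_of_lt hlt'))
        · exfalso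
          have hlt := q.2
          have hlt' := q'.2
          have h1' : q.1.2 = q'.1.1 := congrArg Prod.fst heq
          have h2' : q.1.1 = q'.1.2 := congrArg Prod.snd heq
          rw [h1', h2'] at hlt
          exact absurd hlt (not_lt.2 (le_of_lt hlt'))
        · refine Subtype.ext ?_
          have h1' : q.1.2 = q'.1.2 := congrArg Prod.fst heq
          have h2' : q.1.1 = q'.1.1 := congrArg Prod.snd heq
          exact Prod.ext h2' h1'
    · intro σ
      set M' := M.filter (fun e => ∃ q ∈ σ, q.1 = e ∨ q.1 = (e.2, e.1)) with hM'def
      have hM'sub : M' ⊆ symGraph σ := by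
        intro e he
        obtain ⟨q, hqσ, hq⟩ := (Finset.mem_filter.1 he).2
        rcases hq with rfl | hq
        · exact mem_symGraph_fst hqσ
        · have := mem_symGraph_swap hqσ
          rw [hq] at this
          simpa using this
      have hBLσ : M'.card ≤ BL (symGraph σ) :=
        le_BL hM'sub (BNonCrossing_subset (Finset.filter_subset _ _) hMnc)
      -- card (M \ M') ≤ card (I \ σ)
      have hsd : (M \ M').card ≤ ((ω.filter (fun q => q.1 ∈ M ∨ (q.1.2, q.1.1) ∈ M)) \ σ).card := by
        refine Finset.card_le_card_of_injOn
          (fun e => if hlt : e.1 < e.2 then ⟨e, hlt⟩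
            else if hgt : e.2 < e.1 then ⟨(e.2, e.1), hgt⟩ else q₀) ?_ ?_
        · intro e he
          have heM : e ∈ M := (Finset.mem_sdiff.1 he).1
          have heM' : e ∉ M' := (Finset.mem_sdiff.1 he).2
          obtain ⟨q, hqω, hq⟩ := symEdge_cases (hMsub heM)
          rcases hq with hq | hq
          · have hlt : e.1 < e.2 := by rw [← hq]; exact q.2
            have heq : (⟨e, hlt⟩ : SymPairs n) = q := Subtype.ext hq.symm
            simp only [dif_pos hlt]
            refine Finset.mem_sdiff.2 ⟨Finset.mem_filter.2 ⟨heq ▸ hqω, Or.inl heM⟩, ?_⟩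
            intro hmem
            exact heM' (Finset.mem_filter.2 ⟨heM, ⟨⟨e, hlt⟩, hmem, Or.inl rfl⟩⟩)
          · have hgt : e.2 < e.1 := by
              have := q.2
              rw [hq] at this
              exact this
            have hnlt : ¬ e.1 < e.2 := not_lt.2 (le_of_lt hgt)
            have heq : (⟨(e.2, e.1), hgt⟩ : SymPairs n) = q := Subtype.ext hq.symm
            simp only [dif_neg hnlt, dif_pos hgt]
            refine Finset.mem_sdiff.2 ⟨Finset.mem_filter.2 ⟨heq ▸ hqω, Or.inr (by simpa using heM)⟩, ?_⟩
            intro hmem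
            exact heM' (Finset.mem_filter.2 ⟨heM, ⟨⟨(e.2, e.1), hgt⟩, hmem, Or.inr rfl⟩⟩)
        · intro e he e' he' heq
          have heM : e ∈ M := (Finset.mem_sdiff.1 he).1
          have heM'2 : e' ∈ M := (Finset.mem_sdiff.1 he').1
          have hne : e.1 ≠ e.2 := by
            obtain ⟨q, _, hq⟩ := symEdge_cases (hMsub heM)
            rcases hq with hq | hq
            · rw [← hq]; exact ne_of_lt q.2
            · have := q.2
              rw [hq] at this
              exact (ne_of_lt this).symm
          have hne' : e'.1 ≠ e'.2 := by
            obtain ⟨q, _, hq⟩ := symEdge_cases (hMsub heM'2)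
            rcases hq with hq | hq
            · rw [← hq]; exact ne_of_lt q.2
            · have := q.2
              rw [hq] at this
              exact (ne_of_lt this).symm
          by_cases hlt : e.1 < e.2 <;> by_cases hlt' : e'.1 < e'.2
          · simp only [dif_pos hlt, dif_pos hlt'] at heq
            exact congrArg Subtype.val heq
          · have hgt' : e'.2 < e'.1 := lt_of_le_of_ne (not_lt.1 hlt') (Ne.symm hne')
            simp only [dif_pos hlt, dif_neg hlt', dif_pos hgt'] at heq
            have hvals : e = (e'.2, e'.1) := congrArg Subtype.val heq
            exfalso
            have : (e'.2, e'.1) ∈ M := hvals ▸ heM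
            exact no_mirror hMnc heM'2 this hne'
          · have hgt : e.2 < e.1 := lt_of_le_of_ne (not_lt.1 hlt) (Ne.symm hne)
            simp only [dif_neg hlt, dif_pos hgt, dif_pos hlt'] at heq
            have hvals : (e.2, e.1) = e' := congrArg Subtype.val heq
            exfalso
            have : (e.2, e.1) ∈ M := by
              rw [hvals]; exact heM'2
            exact no_mirror hMnc heM this hne
          · have hgt : e.2 < e.1 := lt_of_le_of_ne (not_lt.1 hlt) (Ne.symm hne)
            have hgt' : e'.2 < e'.1 := lt_of_le_of_ne (not_lt.1 hlt') (Ne.symm hne')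
            simp only [dif_neg hlt, dif_pos hgt, dif_neg hlt', dif_pos hgt'] at heq
            have hvals : (e.2, e.1) = (e'.2, e'.1) := congrArg Subtype.val heq
            have h1 : e.2 = e'.2 := congrArg Prod.fst hvals
            have h2 : e.1 = e'.1 := congrArg Prod.snd hvals
            exact Prod.ext h2 h1
      have hpart : (M \ M').card + M'.card = M.card :=
        Finset.card_sdiff_add_card_eq_card (Finset.filter_subset _ _)
      rw [← hMcard]
      omega
end Application

section Application2
open TalagrandAux

lemma D2_lower {n : ℕ} {A : Finset (SymOmega n)} (hA : A.Nonempty) {a : ℝ} (ha : 0 ≤ a)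
    (hAle : ∀ σ ∈ A, (BL (symGraph σ) : ℝ) ≤ a)
    {ω : SymOmega n} (hωa : a ≤ (BL (symGraph ω) : ℝ)) (hpos : 0 < BL (symGraph ω)) :
    ((BL (symGraph ω) : ℝ) - a) ^ 2 / (BL (symGraph ω) : ℝ) ≤ D2 A ω := by
  obtain ⟨I, hIsub, hIcard, hIcert⟩ := certificate ω
  have hL : 0 < ((BL (symGraph ω) : ℝ)) := by exact_mod_cast hpos
  obtain ⟨L, hLdef⟩ : ∃ L : ℝ, ((BL (symGraph ω) : ℕ) : ℝ) = L := ⟨_, rfl⟩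
  rw [hLdef] at hL hωa ⊢
  have hsqrt : 0 < Real.sqrt L := Real.sqrt_pos.2 hL
  have hUbound : ∀ ν ∈ USet A ω, (L - a) / Real.sqrt L
      ≤ ∑ q, (if q ∈ I then 1 / Real.sqrt L else 0) * ν q := by
    rintro ν ⟨σ, hσA, hν⟩
    have hνnn : ∀ q, 0 ≤ ν q := fun q => le_trans (chi_nonneg ω σ q) (hν q).1
    have h1 : ∑ q, (if q ∈ I then 1 / Real.sqrt L else 0) * ν q
        = (1 / Real.sqrt L) * ∑ q ∈ I, ν q := by
      rw [Finset.mul_sum]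
      rw [show ∑ q, (if q ∈ I then 1 / Real.sqrt L else 0) * ν q
          = ∑ q, (if q ∈ I then (1 / Real.sqrt L) * ν q else 0) from
        Finset.sum_congr rfl fun q _ => by split <;> simp]
      rw [Finset.sum_ite_mem, Finset.univ_inter]
    have h2 : ((I \ σ).card : ℝ) ≤ ∑ q ∈ I, ν q := by
      calc ((I \ σ).card : ℝ) = ∑ _q ∈ I \ σ, (1:ℝ) := by simp
        _ ≤ ∑ q ∈ I \ σ, ν q := by
            refine Finset.sum_le_sum fun q hq => ?_
            have hqω : q ∈ ω := hIsub (Finset.mem_sdiff.1 hq).1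
            have hqσ : q ∉ σ := (Finset.mem_sdiff.1 hq).2
            have : chi ω σ q = 1 := by
              unfold chi
              rw [if_neg]
              simp [hqω, hqσ]
            linarith [(hν q).1, this]
        _ ≤ ∑ q ∈ I, ν q := Finset.sum_le_sum_of_subset_of_nonneg
            (Finset.sdiff_subset) (fun q _ _ => hνnn q)
    have h3 : L - a ≤ ((I \ σ).card : ℝ) := by
      have := hIcert σ
      have hcast : (BL (symGraph ω) : ℝ) ≤ (BL (symGraph σ) : ℝ) + ((I \ σ).card : ℝ) := by
        exact_mod_cast this
      rw [hLdef] at hcast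
      linarith [hAle σ hσA]
    rw [h1]
    calc (L - a) / Real.sqrt L = (1 / Real.sqrt L) * (L - a) := by ring
      _ ≤ (1 / Real.sqrt L) * ∑ q ∈ I, ν q := by
          refine mul_le_mul_of_nonneg_left ?_ (by positivity)
          linarith
  have hhull : ∀ ν ∈ hullU A ω, (L - a) / Real.sqrt L
      ≤ ∑ q, (if q ∈ I then 1 / Real.sqrt L else 0) * ν q := by
    intro ν hν
    refine convexHull_min hUbound ?_ hν
    intro x hx y hy l m hl hm hlm
    have hx' : (L - a) / Real.sqrt L
        ≤ ∑ q, (if q ∈ I then 1 / Real.sqrt L else 0) * x q := hx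
    have hy' : (L - a) / Real.sqrt L
        ≤ ∑ q, (if q ∈ I then 1 / Real.sqrt L else 0) * y q := hy
    show (L - a) / Real.sqrt L
        ≤ ∑ q, (if q ∈ I then 1 / Real.sqrt L else 0) * (l • x + m • y) q
    have hsum : ∑ q, (if q ∈ I then 1 / Real.sqrt L else 0) * (l • x + m • y) q
        = l * ∑ q, (if q ∈ I then 1 / Real.sqrt L else 0) * x q
          + m * ∑ q, (if q ∈ I then 1 / Real.sqrt L else 0) * y q := by
      rw [Finset.mul_sum, Finset.mul_sum, ← Finset.sum_add_distrib]
      exact Finset.sum_congr rfl fun q _ => by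
        simp only [Pi.add_apply, Pi.smul_apply, smul_eq_mul]
        ring
    rw [hsum]
    have hc' : l * ((L - a) / Real.sqrt L) + m * ((L - a) / Real.sqrt L)
        = (L - a) / Real.sqrt L := by rw [← add_mul, hlm, one_mul]
    linarith [mul_le_mul_of_nonneg_left hx' hl, mul_le_mul_of_nonneg_left hy' hm]
  have hc : 0 ≤ (L - a) / Real.sqrt L := div_nonneg (by linarith) hsqrt.le
  have hα2 : ∑ q, (if q ∈ I then 1 / Real.sqrt L else 0) ^ 2 ≤ 1 := by
    have : ∑ q, (if q ∈ I then 1 / Real.sqrt L else 0) ^ 2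
        = (I.card : ℝ) * (1 / Real.sqrt L) ^ 2 := by
      rw [show ∑ q, (if q ∈ I then 1 / Real.sqrt L else 0) ^ 2
          = ∑ q, (if q ∈ I then (1 / Real.sqrt L) ^ 2 else 0) from
        Finset.sum_congr rfl fun q _ => by split <;> simp]
      rw [Finset.sum_ite_mem, Finset.univ_inter, Finset.sum_const, nsmul_eq_mul]
    rw [this, div_pow, one_pow, Real.sq_sqrt hL.le]
    rw [mul_one_div, div_le_one hL]
    calc (I.card : ℝ) ≤ ((BL (symGraph ω) : ℕ) : ℝ) := by exact_mod_cast hIcard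
      _ = L := hLdef
  have hΦ : ∀ ν ∈ hullU A ω, ((L - a) / Real.sqrt L) ^ 2 ≤ Phi ν := by
    intro ν hν
    have h1 := hhull ν hν
    have hCS := Finset.sum_mul_sq_le_sq_mul_sq Finset.univ
      (fun q => if q ∈ I then 1 / Real.sqrt L else 0) ν
    have h2 : ((L - a) / Real.sqrt L) ^ 2
        ≤ (∑ q, (if q ∈ I then 1 / Real.sqrt L else 0) * ν q) ^ 2 := by
      exact pow_le_pow_left₀ hc h1 2
    have hΦnn := Phi_nonneg ν
    unfold Phi
    nlinarith [hCS, hα2, Finset.sum_nonneg fun q (_ : q ∈ Finset.univ) => sq_nonneg (ν q)]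
  have hD := le_D2 hA hΦ
  have heq : ((L - a) / Real.sqrt L) ^ 2 = (L - a) ^ 2 / L := by
    rw [div_pow, Real.sq_sqrt hL.le]
  linarith [heq ▸ hD]

lemma binomW_eq_W {n : ℕ} {p : ℝ} (F : SymOmega n) :
    binomW p F = W p Finset.univ F := by
  unfold binomW W
  exact Finset.prod_congr rfl fun j _ => by congr!

lemma wProb_eq_sum {n : ℕ} {p : ℝ} (P : SymOmega n → Prop) :
    wProb (binomW p : SymOmega n → ℝ) {F | P F}
      = ∑ F ∈ Finset.univ.filter P, W p Finset.univ F := by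
  unfold wProb
  refine Finset.sum_congr ?_ (fun F _ => binomW_eq_W F)
  ext F
  simp [Set.mem_setOf_eq]

lemma wProb_nonneg {n : ℕ} {p : ℝ} (hp0 : 0 ≤ p) (hp1 : p ≤ 1) (S : Set (SymOmega n)) :
    0 ≤ wProb (binomW p : SymOmega n → ℝ) S :=
  Finset.sum_nonneg fun F _ => by
    rw [show binomW p F = W p Finset.univ F from binomW_eq_W F]
    exact W_nonneg hp0 hp1 Finset.univ F

lemma wProb_le_one {n : ℕ} {p : ℝ} (hp0 : 0 ≤ p) (hp1 : p ≤ 1) (S : Set (SymOmega n)) :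
    wProb (binomW p : SymOmega n → ℝ) S ≤ 1 := by
  unfold wProb
  have h1 : ∑ F ∈ Finset.univ.filter (· ∈ S), binomW p F
      ≤ ∑ F : SymOmega n, binomW p F :=
    Finset.sum_le_sum_of_subset_of_nonneg (Finset.filter_subset _ _)
      (fun F _ _ => by
        rw [show binomW p F = W p Finset.univ F from binomW_eq_W F]
        exact W_nonneg hp0 hp1 Finset.univ F)
  have h2 : ∑ F : SymOmega n, binomW p F = 1 := by
    rw [show (∑ F : SymOmega n, binomW p F) = ∑ F : SymOmega n, W p Finset.univ F from
      Finset.sum_congr rfl (fun F _ => binomW_eq_W F)]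
    have := W_mass (p := p) (Finset.univ : Finset (SymPairs n))
    rw [Finset.powerset_univ] at this
    exact this
  linarith

lemma key_product {n : ℕ} {p : ℝ} (hp0 : 0 ≤ p) (hp1 : p ≤ 1) {a b : ℝ}
    (ha : 0 ≤ a) (hab : a ≤ b) (hb : 0 < b) :
    wProb (binomW p : SymOmega n → ℝ) {F | (BL (symGraph F) : ℝ) ≤ a} *
      wProb (binomW p : SymOmega n → ℝ) {F | b ≤ (BL (symGraph F) : ℝ)}
    ≤ Real.exp (-((b - a) ^ 2 / b) / 4) := by
  have hwB0 := wProb_nonneg (n := n) hp0 hp1 {F | b ≤ (BL (symGraph F) : ℝ)}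
  set Afin : Finset (SymOmega n) :=
    Finset.univ.filter (fun F => (BL (symGraph F) : ℝ) ≤ a) with hAfin
  set Bfin : Finset (SymOmega n) :=
    Finset.univ.filter (fun F => b ≤ (BL (symGraph F) : ℝ)) with hBfin
  have hwA : wProb (binomW p : SymOmega n → ℝ) {F | (BL (symGraph F) : ℝ) ≤ a}
      = ∑ F ∈ Afin, W p Finset.univ F := wProb_eq_sum _
  have hwB : wProb (binomW p : SymOmega n → ℝ) {F | b ≤ (BL (symGraph F) : ℝ)}
      = ∑ F ∈ Bfin, W p Finset.univ F := wProb_eq_sum _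
  rcases Afin.eq_empty_or_nonempty with hAe | hAne
  · rw [hwA, hAe]
    simp
    positivity
  · have htal := tal_ind p hp0 hp1 Finset.univ Afin hAne
      (fun x _ => Finset.mem_powerset.2 (Finset.subset_univ x))
    rw [Finset.powerset_univ] at htal
    have hperω : ∀ ω ∈ Bfin, Real.exp (((b - a) ^ 2 / b) / 4)
        ≤ Real.exp (D2 Afin ω / 4) := by
      intro ω hω
      have hbω : b ≤ (BL (symGraph ω) : ℝ) := by
        have := (Finset.mem_filter.1 hω).2
        exact this
      have hpos : 0 < BL (symGraph ω) := by
        by_contra h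
        push_neg at h
        have h0 : BL (symGraph ω) = 0 := Nat.le_zero.1 h
        rw [h0] at hbω
        simp at hbω
        linarith
      have hD := D2_lower hAne ha
        (fun σ hσ => (Finset.mem_filter.1 hσ).2) (le_trans hab hbω) hpos
      have hLb : b ≤ (BL (symGraph ω) : ℝ) := hbω
      have hLpos : (0:ℝ) < (BL (symGraph ω) : ℝ) := by exact_mod_cast hpos
      have hmono : (b - a) ^ 2 / b ≤ ((BL (symGraph ω) : ℝ) - a) ^ 2 / (BL (symGraph ω) : ℝ) := by
        obtain ⟨L, hLdef⟩ : ∃ L : ℝ, ((BL (symGraph ω) : ℕ) : ℝ) = L := ⟨_, rfl⟩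
        rw [hLdef] at hLb hLpos ⊢
        rw [div_le_div_iff₀ hb hLpos]
        have h1 : a ^ 2 ≤ b * L := by nlinarith
        have h2 : 0 ≤ (L - b) * (b * L - a ^ 2) := mul_nonneg (by linarith) (by linarith)
        nlinarith
      refine Real.exp_le_exp.2 ?_
      linarith
    have hlow : Real.exp (((b - a) ^ 2 / b) / 4) * ∑ F ∈ Bfin, W p Finset.univ F
        ≤ ∑ ω : SymOmega n, W p Finset.univ ω * Real.exp (D2 Afin ω / 4) := by
      calc Real.exp (((b - a) ^ 2 / b) / 4) * ∑ F ∈ Bfin, W p Finset.univ F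
          = ∑ F ∈ Bfin, W p Finset.univ F * Real.exp (((b - a) ^ 2 / b) / 4) := by
            rw [Finset.mul_sum]
            exact Finset.sum_congr rfl fun F _ => by ring
        _ ≤ ∑ F ∈ Bfin, W p Finset.univ F * Real.exp (D2 Afin F / 4) :=
            Finset.sum_le_sum fun F hF => mul_le_mul_of_nonneg_left (hperω F hF)
              (W_nonneg hp0 hp1 _ F)
        _ ≤ ∑ ω : SymOmega n, W p Finset.univ ω * Real.exp (D2 Afin ω / 4) :=
            Finset.sum_le_sum_of_subset_of_nonneg (Finset.subset_univ _)
              (fun ω _ _ => mul_nonneg (W_nonneg hp0 hp1 _ ω) (Real.exp_pos _).le)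
    rw [hwA, hwB]
    have hPAnn : 0 ≤ ∑ F ∈ Afin, W p Finset.univ F :=
      Finset.sum_nonneg fun F _ => W_nonneg hp0 hp1 _ F
    have hPBnn : 0 ≤ ∑ F ∈ Bfin, W p Finset.univ F :=
      Finset.sum_nonneg fun F _ => W_nonneg hp0 hp1 _ F
    have hE : 0 < Real.exp (((b - a) ^ 2 / b) / 4) := Real.exp_pos _
    have hcomb : Real.exp (((b - a) ^ 2 / b) / 4)
        * ((∑ F ∈ Afin, W p Finset.univ F) * (∑ F ∈ Bfin, W p Finset.univ F)) ≤ 1 := by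
      have h2 := mul_le_mul_of_nonneg_right hlow hPAnn
      calc Real.exp (((b - a) ^ 2 / b) / 4)
          * ((∑ F ∈ Afin, W p Finset.univ F) * (∑ F ∈ Bfin, W p Finset.univ F))
          = (Real.exp (((b - a) ^ 2 / b) / 4) * ∑ F ∈ Bfin, W p Finset.univ F)
            * (∑ F ∈ Afin, W p Finset.univ F) := by ring
        _ ≤ (∑ ω : SymOmega n, W p Finset.univ ω * Real.exp (D2 Afin ω / 4))
            * (∑ F ∈ Afin, W p Finset.univ F) := h2
        _ ≤ 1 := htal
    rw [show -((b - a) ^ 2 / b) / 4 = -(((b - a) ^ 2 / b) / 4) by ring, Real.exp_neg]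
    calc (∑ F ∈ Afin, W p Finset.univ F) * (∑ F ∈ Bfin, W p Finset.univ F)
        = (Real.exp (((b - a) ^ 2 / b) / 4))⁻¹ * (Real.exp (((b - a) ^ 2 / b) / 4)
          * ((∑ F ∈ Afin, W p Finset.univ F) * (∑ F ∈ Bfin, W p Finset.univ F))) := by
          field_simp
      _ ≤ (Real.exp (((b - a) ^ 2 / b) / 4))⁻¹ * 1 :=
          mul_le_mul_of_nonneg_left hcomb (inv_nonneg.2 hE.le)
      _ = (Real.exp (((b - a) ^ 2 / b) / 4))⁻¹ := mul_one _
end Application2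


/-- The symmetric binomial random graph model has concentration constant `1/4`. -/
theorem symmetric_concentration (n : ℕ) (p : ℝ) (hp0 : 0 ≤ p) (hp1 : p ≤ 1)
    (Med : ℝ)
    (hMed : IsMedianW (binomW p : SymOmega n → ℝ) (fun F => (BL (symGraph F) : ℝ)) Med)
    (s : ℝ) (hs : 0 ≤ s) :
    wProb (binomW p : SymOmega n → ℝ) {F | (BL (symGraph F) : ℝ) ≤ (1 - s) * Med} ≤
      2 * Real.exp (-(s ^ 2 * Med) / 4) ∧
    wProb (binomW p : SymOmega n → ℝ) {F | (1 + s) * Med ≤ (BL (symGraph F) : ℝ)} ≤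
      2 * Real.exp (-(s ^ 2 / (1 + s) * Med) / 4) := by
  have hMed1 : 1/2 ≤ wProb (binomW p : SymOmega n → ℝ)
      {F | (BL (symGraph F) : ℝ) ≤ Med} := hMed.1
  have hMed2 : 1/2 ≤ wProb (binomW p : SymOmega n → ℝ)
      {F | Med ≤ (BL (symGraph F) : ℝ)} := hMed.2
  have hMednn : 0 ≤ Med := by
    by_contra h
    push_neg at h
    have hempty : wProb (binomW p : SymOmega n → ℝ)
        {F | (BL (symGraph F) : ℝ) ≤ Med} = 0 := by
      rw [wProb_eq_sum]
      have he : Finset.univ.filter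
          (fun F : SymOmega n => (BL (symGraph F) : ℝ) ≤ Med) = ∅ :=
        Finset.filter_eq_empty_iff.2 fun F _ => by
          push_neg
          have h0 : (0:ℝ) ≤ (BL (symGraph F) : ℝ) := Nat.cast_nonneg _
          linarith
      rw [he, Finset.sum_empty]
    rw [hempty] at hMed1
    linarith
  constructor
  · -- lower tail
    rcases eq_or_lt_of_le hMednn with hM0 | hMpos
    · have hE : Real.exp (-(s ^ 2 * Med) / 4) = 1 := by
        rw [← hM0, mul_zero, neg_zero, zero_div, Real.exp_zero]
      rw [hE]
      linarith [wProb_le_one hp0 hp1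
        {F : SymOmega n | (BL (symGraph F) : ℝ) ≤ (1 - s) * Med}]
    · rcases le_or_gt s 1 with hs1 | hs1
      · have ha : 0 ≤ (1 - s) * Med := mul_nonneg (by linarith) hMednn
        have hab : (1 - s) * Med ≤ Med := by nlinarith
        have hkey := key_product (n := n) hp0 hp1 ha hab hMpos
        have hMne : Med ≠ 0 := ne_of_gt hMpos
        have hexp : -((Med - (1 - s) * Med) ^ 2 / Med) / 4 = -(s ^ 2 * Med) / 4 := by
          field_simp
          ring
        rw [hexp] at hkey
        have hPA0 := wProb_nonneg hp0 hp1
          {F : SymOmega n | (BL (symGraph F) : ℝ) ≤ (1 - s) * Med}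
        have hh := mul_le_mul_of_nonneg_left hMed2 hPA0
        linarith [hh, hkey]
      · have hempty : wProb (binomW p : SymOmega n → ℝ)
            {F | (BL (symGraph F) : ℝ) ≤ (1 - s) * Med} = 0 := by
          rw [wProb_eq_sum]
          have hneg : (1 - s) * Med < 0 := mul_neg_of_neg_of_pos (by linarith) hMpos
          have he : Finset.univ.filter
              (fun F : SymOmega n => (BL (symGraph F) : ℝ) ≤ (1 - s) * Med) = ∅ :=
            Finset.filter_eq_empty_iff.2 fun F _ => by
              push_neg
              have h0 : (0:ℝ) ≤ (BL (symGraph F) : ℝ) := Nat.cast_nonneg _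
              linarith
          rw [he, Finset.sum_empty]
        rw [hempty]
        positivity
  · -- upper tail
    rcases eq_or_lt_of_le hMednn with hM0 | hMpos
    · have hE : Real.exp (-(s ^ 2 / (1 + s) * Med) / 4) = 1 := by
        rw [← hM0, mul_zero, neg_zero, zero_div, Real.exp_zero]
      rw [hE]
      linarith [wProb_le_one hp0 hp1
        {F : SymOmega n | (1 + s) * Med ≤ (BL (symGraph F) : ℝ)}]
    · have ha : 0 ≤ Med := hMednn
      have hab : Med ≤ (1 + s) * Med := by nlinarith
      have hb : 0 < (1 + s) * Med := by nlinarith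
      have hkey := key_product (n := n) hp0 hp1 ha hab hb
      have h1s : (0:ℝ) < 1 + s := by linarith
      have hMne : Med ≠ 0 := ne_of_gt hMpos
      have h1sne : (1:ℝ) + s ≠ 0 := ne_of_gt h1s
      have hexp : -(((1 + s) * Med - Med) ^ 2 / ((1 + s) * Med)) / 4
          = -(s ^ 2 / (1 + s) * Med) / 4 := by
        field_simp
        ring
      rw [hexp] at hkey
      have hPB0 := wProb_nonneg hp0 hp1
        {F : SymOmega n | (1 + s) * Med ≤ (BL (symGraph F) : ℝ)}
      have hh := mul_le_mul_of_nonneg_left hMed1 hPB0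
      nlinarith [hh, hkey]
end
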